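/- arXiv:1506.06715 — 9 statements merged into one kernel-verified Lean document; each statement's English description precedes it below -/
import Mathlib

section
/- Let f be a non-negative monotone submodular set function on a finite ground set N with f(∅) = 0, let k ≥ 1 and β > 0, and let ALG be a β-nice algorithm for f with output size bound k' = k. Under a random partition of N into m parts (m ≥ 1), 𝔼[ f_k( ALG(T_1) ∪ … ∪ ALG(T_m) ) ] ≥ (1/(2+β))·f_k(N). (That is, any β-nice algorithm is a 1/(2+β)-approximate randomized composable core-set of size k and multiplicity 1 for monotone submodular maximization with cardinality constraint k.) -/
open Finset

/-- The part of a random partition: `T_i(g) = {x : g x = i}`. -/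
def part {α : Type*} [Fintype α] [DecidableEq α] {m : ℕ} (g : α → Fin m) (i : Fin m) :
    Finset α :=
  Finset.univ.filter fun a => g a = i

/-- `f_k(S) = max { f(S') : S' ⊆ S, |S'| ≤ k }`. -/
noncomputable def fk {α : Type*} [DecidableEq α] (f : Finset α → ℝ) (k : ℕ)
    (S : Finset α) : ℝ :=
  (S.powerset.filter fun S' => S'.card ≤ k).sup'
    ⟨∅, by simp⟩ f

namespace Stmt5Aux

variable {α : Type*} [DecidableEq α]

lemma fk_ge (f : Finset α → ℝ) (k : ℕ) {S C : Finset α} (hC : C ⊆ S) (hcard : C.card ≤ k) :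
    f C ≤ fk f k S :=
  Finset.le_sup' f (by simp only [Finset.mem_filter, Finset.mem_powerset]; exact ⟨hC, hcard⟩)

lemma fk_exists (f : Finset α → ℝ) (k : ℕ) (S : Finset α) :
    ∃ C, C ⊆ S ∧ C.card ≤ k ∧ fk f k S = f C := by
  obtain ⟨C, hC, hval⟩ := Finset.exists_mem_eq_sup'
    (⟨∅, by simp⟩ : (S.powerset.filter fun S' => S'.card ≤ k).Nonempty) f
  simp only [Finset.mem_filter, Finset.mem_powerset] at hC
  exact ⟨C, hC.1, hC.2, hval⟩

lemma part_comp [Fintype α] {m : ℕ} (σ : Equiv.Perm (Fin m)) (g : α → Fin m) (j : Fin m) :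
    part (σ ∘ g) j = part g (σ.symm j) := by
  ext a
  simp only [part, Finset.mem_filter, Finset.mem_univ, true_and, Function.comp_apply]
  constructor
  · intro h; rw [← h, Equiv.symm_apply_apply]
  · intro h; rw [h, Equiv.apply_symm_apply]

lemma part_update_self [Fintype α] {m : ℕ} (g : α → Fin m) (x : α) (j : Fin m) :
    part (Function.update g x j) j = insert x (part g j) := by
  ext a
  by_cases hax : a = x
  · subst hax; simp [part]
  · simp [part, Function.update_of_ne hax, hax]

lemma part_update_other [Fintype α] {m : ℕ} {g : α → Fin m} {x : α} {j : Fin m}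
    (hgx : g x = j) (i : Fin m) :
    insert x (part (Function.update g x i) j) = part g j := by
  ext a
  by_cases hax : a = x
  · subst hax; simp [part, hgx]
  · simp [part, Function.update_of_ne hax, hax]

lemma filter_card_fiber [Fintype α] {m : ℕ} (x : α)
    (P : (α → Fin m) → Prop) [DecidablePred P] :
    (Finset.univ.filter P).card
      = ∑ i : Fin m, (Finset.univ.filter fun g : α → Fin m => P g ∧ g x = i).card := by
  rw [Finset.card_eq_sum_card_fiberwise (f := fun g : α → Fin m => g x)
      (t := Finset.univ) (fun g _ => Finset.mem_univ _)]
  exact Finset.sum_congr rfl fun i _ => by rw [Finset.filter_filter]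

lemma count_key [Fintype α] {m : ℕ} (i0 : Fin m) (ALG : Finset α → Finset α) (x : α) :
    (Finset.univ.filter fun g : α → Fin m => x ∈ ALG (part g (g x))).card
      = (Finset.univ.filter fun g : α → Fin m => x ∈ ALG (insert x (part g i0))).card := by
  classical
  rw [filter_card_fiber x, filter_card_fiber x]
  refine Finset.sum_congr rfl fun i _ => ?_
  have hL : (Finset.univ.filter fun g : α → Fin m => (x ∈ ALG (part g (g x))) ∧ g x = i)
      = Finset.univ.filter fun g : α → Fin m => (x ∈ ALG (part g i)) ∧ g x = i := by
    ext g
    simp only [Finset.mem_filter, Finset.mem_univ, true_and]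
    constructor
    · rintro ⟨h1, h2⟩
      refine ⟨?_, h2⟩
      rw [← h2]
      exact h1
    · rintro ⟨h1, h2⟩
      refine ⟨?_, h2⟩
      rw [h2]
      exact h1
  rw [hL]
  have hswap_card :
      (Finset.univ.filter fun g : α → Fin m => (x ∈ ALG (part g i)) ∧ g x = i).card
      = (Finset.univ.filter fun g : α → Fin m => (x ∈ ALG (part g i0)) ∧ g x = i0).card := by
    apply Finset.card_nbij' (fun g => (Equiv.swap i0 i) ∘ g) (fun g => (Equiv.swap i0 i) ∘ g)
    · intro g hg
      simp only [Finset.mem_coe, Finset.mem_filter, Finset.mem_univ, true_and] at hg ⊢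
      have hp : part ((Equiv.swap i0 i) ∘ g) i0 = part g i := by
        rw [part_comp, Equiv.symm_swap, Equiv.swap_apply_left]
      constructor
      · rw [hp]; exact hg.1
      · simp only [Function.comp_apply, hg.2, Equiv.swap_apply_right]
    · intro g hg
      simp only [Finset.mem_coe, Finset.mem_filter, Finset.mem_univ, true_and] at hg ⊢
      have hp : part ((Equiv.swap i0 i) ∘ g) i = part g i0 := by
        rw [part_comp, Equiv.symm_swap, Equiv.swap_apply_right]
      constructor
      · rw [hp]; exact hg.1
      · simp only [Function.comp_apply, hg.2, Equiv.swap_apply_left]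
    · intro g _; funext a; simp [Function.comp, Equiv.swap_apply_self]
    · intro g _; funext a; simp [Function.comp, Equiv.swap_apply_self]
  have hupd_card :
      (Finset.univ.filter fun g : α → Fin m => (x ∈ ALG (insert x (part g i0))) ∧ g x = i).card
      = (Finset.univ.filter fun g : α → Fin m => (x ∈ ALG (part g i0)) ∧ g x = i0).card := by
    apply Finset.card_nbij' (fun g => Function.update g x i0) (fun g => Function.update g x i)
    · intro g hg
      simp only [Finset.mem_coe, Finset.mem_filter, Finset.mem_univ, true_and] at hg ⊢
      refine ⟨?_, Function.update_self x i0 g⟩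
      rw [part_update_self]
      exact hg.1
    · intro g hg
      simp only [Finset.mem_coe, Finset.mem_filter, Finset.mem_univ, true_and] at hg ⊢
      refine ⟨?_, Function.update_self x i g⟩
      rw [part_update_other hg.2]
      exact hg.1
    · intro g hg
      simp only [Finset.mem_coe, Finset.mem_filter, Finset.mem_univ, true_and] at hg
      beta_reduce
      rw [Function.update_idem, ← hg.2]
      exact Function.update_eq_self x g
    · intro g hg
      simp only [Finset.mem_coe, Finset.mem_filter, Finset.mem_univ, true_and] at hg
      beta_reduce
      rw [Function.update_idem, ← hg.2]
      exact Function.update_eq_self x g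
  rw [hswap_card, hupd_card]

lemma union_bound (f : Finset α → ℝ)
    (hsub : ∀ X Y : Finset α, X ⊆ Y → ∀ x, x ∉ Y →
      f (insert x Y) - f Y ≤ f (insert x X) - f X)
    (A : Finset α) (c : ℝ) (hc : 0 ≤ c) :
    ∀ D : Finset α, (∀ y ∈ D, f (insert y A) - f A ≤ c) →
      f (A ∪ D) ≤ f A + D.card * c := by
  intro D
  induction D using Finset.induction_on with
  | empty => intro _; simp
  | @insert y D hy ih =>
      intro hD
      have hD' : ∀ z ∈ D, f (insert z A) - f A ≤ c :=
        fun z hz => hD z (Finset.mem_insert_of_mem hz)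
      have hyc : f (insert y A) - f A ≤ c := hD y (Finset.mem_insert_self _ _)
      have hih := ih hD'
      rw [Finset.union_insert, Finset.card_insert_of_notMem hy]
      push_cast
      by_cases hyAD : y ∈ A ∪ D
      · rw [Finset.insert_eq_self.2 hyAD]
        nlinarith
      · have h1 := hsub A (A ∪ D) Finset.subset_union_left y hyAD
        nlinarith

lemma upper_bound [Fintype α] {m : ℕ} (i0 : Fin m)
    (f : Finset α → ℝ)
    (hsub : ∀ X Y : Finset α, X ⊆ Y → ∀ x, x ∉ Y →
      f (insert x Y) - f Y ≤ f (insert x X) - f X)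
    (hmono : ∀ X Y : Finset α, X ⊆ Y → f X ≤ f Y)
    (hnonneg : ∀ S : Finset α, 0 ≤ f S)
    (k : ℕ) (hk : 1 ≤ k) (β : ℝ) (hβ : 0 < β)
    (ALG : Finset α → Finset α)
    (hALGcard : ∀ T, (ALG T).card ≤ k)
    (hALGind : ∀ T : Finset α, ∀ x ∈ T \ ALG T, ALG (T.erase x) = ALG T)
    (hALGmarg : ∀ T : Finset α, ∀ x ∈ T \ ALG T,
      f (insert x (ALG T)) - f (ALG T) ≤ β * f (ALG T) / k)
    (O : Finset α) (hOk : O.card ≤ k) (g : α → Fin m) :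
    f (O ∩ (Finset.univ.biUnion fun i => ALG (part g i))) +
      f (O ∩ (Finset.univ.filter fun a => a ∉ ALG (insert a (part g i0)))) ≤
      (2 + β) * fk f k (Finset.univ.biUnion fun i => ALG (part g i)) := by
  classical
  set S : Finset α := Finset.univ.biUnion fun i => ALG (part g i) with hS
  set D : Finset α := Finset.univ.filter fun a => a ∉ ALG (insert a (part g i0)) with hD
  set A : Finset α := ALG (part g i0) with hA
  have hAS : A ⊆ S := Finset.subset_biUnion_of_mem (fun i => ALG (part g i)) (Finset.mem_univ i0)
  have hfk1 : f A ≤ fk f k S := fk_ge f k hAS (hALGcard _)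
  have hfA0 : 0 ≤ f A := hnonneg A
  have hk0 : (0:ℝ) < (k:ℝ) := by exact_mod_cast hk
  have hc : 0 ≤ β * f A / k := by positivity
  have helem : ∀ y ∈ O ∩ D, f (insert y A) - f A ≤ β * f A / k := by
    intro y hy
    have hyD : y ∉ ALG (insert y (part g i0)) := by
      have h := (Finset.mem_inter.1 hy).2
      rw [hD] at h
      simpa using h
    have hmem : y ∈ insert y (part g i0) \ ALG (insert y (part g i0)) :=
      Finset.mem_sdiff.2 ⟨Finset.mem_insert_self _ _, hyD⟩
    have hTeq : ALG (insert y (part g i0)) = A := by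
      by_cases hyp : y ∈ part g i0
      · rw [Finset.insert_eq_self.2 hyp]
      · have h2 := hALGind (insert y (part g i0)) y hmem
        rw [Finset.erase_insert hyp] at h2
        exact h2.symm
    have h3 := hALGmarg (insert y (part g i0)) y hmem
    rw [hTeq] at h3
    exact h3
  have hub := union_bound f hsub A (β * f A / k) hc (O ∩ D) helem
  have hcard : ((O ∩ D).card : ℝ) ≤ (k:ℝ) := by
    exact_mod_cast le_trans (Finset.card_le_card Finset.inter_subset_left) hOk
  have h6 : ((O ∩ D).card : ℝ) * (β * f A / k) ≤ (k:ℝ) * (β * f A / k) :=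
    mul_le_mul_of_nonneg_right hcard hc
  have h7 : (k:ℝ) * (β * f A / k) = β * f A := by field_simp
  have h5 : f (O ∩ D) ≤ f (A ∪ (O ∩ D)) := hmono _ _ Finset.subset_union_right
  have h8 : f (O ∩ S) ≤ fk f k S :=
    fk_ge f k Finset.inter_subset_right
      (le_trans (Finset.card_le_card Finset.inter_subset_left) hOk)
  nlinarith [hβ, hfk1, hnonneg (O ∩ S)]

lemma key_lower [Fintype α] {m : ℕ} (i0 : Fin m)
    (f : Finset α → ℝ)
    (hsub : ∀ X Y : Finset α, X ⊆ Y → ∀ x, x ∉ Y →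
      f (insert x Y) - f Y ≤ f (insert x X) - f X)
    (hmono : ∀ X Y : Finset α, X ⊆ Y → f X ≤ f Y)
    (hempty : f ∅ = 0)
    (ALG : Finset α → Finset α)
    (hALGsub : ∀ T, ALG T ⊆ T)
    (O : Finset α) :
    ((m : ℝ) ^ Fintype.card α) * f O ≤
      ∑ g : α → Fin m,
        (f (O ∩ (Finset.univ.biUnion fun i => ALG (part g i))) +
          f (O ∩ (Finset.univ.filter fun a => a ∉ ALG (insert a (part g i0))))) := by
  classical
  induction O using Finset.induction_on with
  | empty => simp [hempty]
  | @insert x O hx ih =>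
      have hΔ0 : 0 ≤ f (insert x O) - f O :=
        sub_nonneg.2 (hmono _ _ (Finset.subset_insert _ _))
      have hgen : ∀ B : Finset α,
          f (O ∩ B) + (if x ∈ B then f (insert x O) - f O else 0)
            ≤ f (insert x O ∩ B) := by
        intro B
        by_cases hxB : x ∈ B
        · rw [if_pos hxB, Finset.insert_inter_of_mem hxB]
          have h := hsub (O ∩ B) O Finset.inter_subset_left x hx
          linarith
        · rw [if_neg hxB, Finset.insert_inter_of_notMem hxB, add_zero]
      have memS : ∀ g : α → Fin m,
          (x ∈ Finset.univ.biUnion fun i => ALG (part g i)) ↔ x ∈ ALG (part g (g x)) := by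
        intro g
        constructor
        · intro h
          obtain ⟨i, -, hi⟩ := Finset.mem_biUnion.1 h
          have hxp : x ∈ part g i := hALGsub _ hi
          have hgx : g x = i := by simpa [part] using hxp
          rwa [hgx]
        · intro h
          exact Finset.mem_biUnion.2 ⟨g x, Finset.mem_univ _, h⟩
      have hfiltS : (Finset.univ.filter fun g : α → Fin m =>
            x ∈ Finset.univ.biUnion fun i => ALG (part g i))
          = Finset.univ.filter fun g : α → Fin m => x ∈ ALG (part g (g x)) := by
        ext g
        simp only [Finset.mem_filter, Finset.mem_univ, true_and]
        exact memS g
      have hfiltD : (Finset.univ.filter fun g : α → Fin m =>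
            x ∈ Finset.univ.filter fun a => a ∉ ALG (insert a (part g i0)))
          = Finset.univ.filter fun g : α → Fin m =>
              ¬ (x ∈ ALG (insert x (part g i0))) := by
        ext g
        simp
      have hcount :
          (Finset.univ.filter fun g : α → Fin m =>
            x ∈ Finset.univ.biUnion fun i => ALG (part g i)).card
          + (Finset.univ.filter fun g : α → Fin m =>
            x ∈ Finset.univ.filter fun a => a ∉ ALG (insert a (part g i0))).card
          = m ^ Fintype.card α := by
        rw [hfiltS, hfiltD, count_key i0 ALG x,
          Finset.card_filter_add_card_filter_not, Finset.card_univ,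
          Fintype.card_fun, Fintype.card_fin]
      -- abbreviations
      set Δ : ℝ := f (insert x O) - f O with hΔdef
      set cS : ℕ := (Finset.univ.filter fun g : α → Fin m =>
        x ∈ Finset.univ.biUnion fun i => ALG (part g i)).card with hcS
      set cD : ℕ := (Finset.univ.filter fun g : α → Fin m =>
        x ∈ Finset.univ.filter fun a => a ∉ ALG (insert a (part g i0))).card with hcD
      have hiteS : ∑ g : α → Fin m,
          (if x ∈ (Finset.univ.biUnion fun i => ALG (part g i)) then Δ else 0)
          = (cS : ℝ) * Δ := by
        rw [← Finset.sum_filter, Finset.sum_const, nsmul_eq_mul]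
      have hiteD : ∑ g : α → Fin m,
          (if x ∈ (Finset.univ.filter fun a => a ∉ ALG (insert a (part g i0))) then Δ else 0)
          = (cD : ℝ) * Δ := by
        rw [← Finset.sum_filter, Finset.sum_const, nsmul_eq_mul]
      have hstep : ∑ g : α → Fin m,
            ((f (O ∩ (Finset.univ.biUnion fun i => ALG (part g i)))
                + (if x ∈ (Finset.univ.biUnion fun i => ALG (part g i)) then Δ else 0))
              + (f (O ∩ (Finset.univ.filter fun a => a ∉ ALG (insert a (part g i0))))
                + (if x ∈ (Finset.univ.filter fun a => a ∉ ALG (insert a (part g i0))) then Δ else 0)))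
          ≤ ∑ g : α → Fin m,
            (f ((insert x O) ∩ (Finset.univ.biUnion fun i => ALG (part g i))) +
              f ((insert x O) ∩ (Finset.univ.filter fun a => a ∉ ALG (insert a (part g i0))))) :=
        Finset.sum_le_sum fun g _ => add_le_add (hgen _) (hgen _)
      have hsplit : ∑ g : α → Fin m,
            ((f (O ∩ (Finset.univ.biUnion fun i => ALG (part g i)))
                + (if x ∈ (Finset.univ.biUnion fun i => ALG (part g i)) then Δ else 0))
              + (f (O ∩ (Finset.univ.filter fun a => a ∉ ALG (insert a (part g i0))))
                + (if x ∈ (Finset.univ.filter fun a => a ∉ ALG (insert a (part g i0))) then Δ else 0)))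
          = (∑ g : α → Fin m,
              (f (O ∩ (Finset.univ.biUnion fun i => ALG (part g i))) +
                f (O ∩ (Finset.univ.filter fun a => a ∉ ALG (insert a (part g i0))))))
            + ((cS : ℝ) * Δ + (cD : ℝ) * Δ) := by
        rw [← hiteS, ← hiteD, ← Finset.sum_add_distrib, ← Finset.sum_add_distrib]
        exact Finset.sum_congr rfl fun g _ => by ring
      have hcast : ((cS : ℝ) + (cD : ℝ)) = (m : ℝ) ^ Fintype.card α := by
        exact_mod_cast hcount
      have hprod : ((m : ℝ) ^ Fintype.card α) * Δ = (cS : ℝ) * Δ + (cD : ℝ) * Δ := by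
        rw [← hcast]; ring
      have hMf : ((m : ℝ) ^ Fintype.card α) * f (insert x O)
          = ((m : ℝ) ^ Fintype.card α) * f O + ((m : ℝ) ^ Fintype.card α) * Δ := by
        rw [hΔdef]; ring
      linarith [hstep, hsplit, ih]

end Stmt5Aux

/-- any β-nice algorithm with output size `k` is a `1/(2+β)`-approximate
randomized composable core-set (multiplicity 1) for monotone submodular maximization with
cardinality constraint `k`. -/
theorem stmt_5 {α : Type*} [DecidableEq α] [Fintype α] {m : ℕ} (hm : 1 ≤ m)
    (f : Finset α → ℝ)
    (hsub : ∀ X Y : Finset α, X ⊆ Y → ∀ x, x ∉ Y →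
      f (insert x Y) - f Y ≤ f (insert x X) - f X)
    (hmono : ∀ X Y : Finset α, X ⊆ Y → f X ≤ f Y)
    (hnonneg : ∀ S : Finset α, 0 ≤ f S)
    (hempty : f ∅ = 0)
    (k : ℕ) (hk : 1 ≤ k) (β : ℝ) (hβ : 0 < β)
    (ALG : Finset α → Finset α)
    (hALGsub : ∀ T, ALG T ⊆ T)
    (hALGcard : ∀ T, (ALG T).card ≤ k)
    (hALGind : ∀ T : Finset α, ∀ x ∈ T \ ALG T, ALG (T.erase x) = ALG T)
    (hALGmarg : ∀ T : Finset α, ∀ x ∈ T \ ALG T,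
      f (insert x (ALG T)) - f (ALG T) ≤ β * f (ALG T) / k) :
    (∑ g : α → Fin m, fk f k (Finset.univ.biUnion fun i => ALG (part g i))) /
        (m : ℝ) ^ Fintype.card α
      ≥ (1 / (2 + β)) * fk f k Finset.univ := by
  classical
  obtain ⟨O, hOsub, hOk, hOval⟩ := Stmt5Aux.fk_exists f k (Finset.univ : Finset α)
  have hm0 : 0 < m := hm
  set i0 : Fin m := ⟨0, hm0⟩ with hi0def
  have hkey := Stmt5Aux.key_lower i0 f hsub hmono hempty ALG hALGsub O
  have hupper : ∀ g : α → Fin m,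
      f (O ∩ (Finset.univ.biUnion fun i => ALG (part g i))) +
        f (O ∩ (Finset.univ.filter fun a => a ∉ ALG (insert a (part g i0)))) ≤
        (2 + β) * fk f k (Finset.univ.biUnion fun i => ALG (part g i)) :=
    fun g => Stmt5Aux.upper_bound i0 f hsub hmono hnonneg k hk β hβ ALG
      hALGcard hALGind hALGmarg O hOk g
  have hsum : ((m:ℝ) ^ Fintype.card α) * f O
      ≤ (2 + β) * ∑ g : α → Fin m, fk f k (Finset.univ.biUnion fun i => ALG (part g i)) := by
    calc ((m:ℝ) ^ Fintype.card α) * f O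
        ≤ ∑ g : α → Fin m,
            (f (O ∩ (Finset.univ.biUnion fun i => ALG (part g i))) +
              f (O ∩ (Finset.univ.filter fun a => a ∉ ALG (insert a (part g i0))))) := hkey
      _ ≤ ∑ g : α → Fin m,
            (2 + β) * fk f k (Finset.univ.biUnion fun i => ALG (part g i)) :=
          Finset.sum_le_sum fun g _ => hupper g
      _ = (2 + β) * ∑ g : α → Fin m,
            fk f k (Finset.univ.biUnion fun i => ALG (part g i)) := by
          rw [Finset.mul_sum]
  rw [ge_iff_le, hOval]
  have h2β : (0:ℝ) < 2 + β := by linarith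
  have hmR : (0:ℝ) < (m:ℝ) := by exact_mod_cast hm0
  have hM : (0:ℝ) < (m:ℝ) ^ Fintype.card α := pow_pos hmR _
  rw [one_div, inv_mul_eq_div, div_le_div_iff₀ h2β hM]
  calc f O * ((m:ℝ) ^ Fintype.card α)
      = ((m:ℝ) ^ Fintype.card α) * f O := mul_comm _ _
    _ ≤ (2 + β) * ∑ g : α → Fin m,
          fk f k (Finset.univ.biUnion fun i => ALG (part g i)) := hsum
    _ = (∑ g : α → Fin m,
          fk f k (Finset.univ.biUnion fun i => ALG (part g i))) * (2 + β) := mul_comm _ _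
end

section
/- Let f be a non-negative monotone submodular set function on a finite ground set N with f(∅) = 0, let k ≥ 1 and β > 0, let OPT ⊆ N with |OPT| ≤ k, and let ALG be a β-nice algorithm for f with output size bound k' = k. Consider a random partition of N into m parts, and suppose that for every assignment g a set S(g) ⊆ ALG(T_1(g)) ∪ … ∪ ALG(T_m(g)) with |S(g)| ≤ k satisfies f(S(g)) ≥ (1 − 1/e)·f( OPT ∩ (ALG(T_1(g)) ∪ … ∪ ALG(T_m(g))) ) (e.g., S(g) is the output of the greedy algorithm on the union of the core-sets). Then 𝔼[ max{ f(S), max_{1 ≤ i ≤ m} f(ALG(T_i)) } ] ≥ ((1 − 1/e)/(1 + (1 − 1/e)(1 + β)))·f(OPT). In particular for β = 1 the right-hand side is at least 0.27·f(OPT). -/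
open Finset

private lemma union_chain {α : Type*} [DecidableEq α]
    (f : Finset α → ℝ)
    (hsub : ∀ X Y : Finset α, X ⊆ Y → ∀ x, x ∉ Y →
      f (insert x Y) - f Y ≤ f (insert x X) - f X)
    (hmono : ∀ X Y : Finset α, X ⊆ Y → f X ≤ f Y)
    (A : Finset α) (E : Finset α) :
    f (A ∪ E) ≤ f A + ∑ x ∈ E, (f (insert x A) - f A) := by
  induction E using Finset.induction_on with
  | empty => simp
  | @insert x E hx ih =>
    rw [sum_insert hx, union_insert]
    by_cases hxAE : x ∈ A ∪ E
    · rw [insert_eq_self.2 hxAE]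
      have h0 : f A ≤ f (insert x A) := hmono _ _ (subset_insert _ _)
      linarith
    · have h1 := hsub A (A ∪ E) subset_union_left x hxAE
      linarith

private lemma chain_delta {α : Type*} [DecidableEq α]
    (f : Finset α → ℝ)
    (hsub : ∀ X Y : Finset α, X ⊆ Y → ∀ x, x ∉ Y →
      f (insert x Y) - f Y ≤ f (insert x X) - f X)
    (hmono : ∀ X Y : Finset α, X ⊆ Y → f X ≤ f Y)
    (hempty : f ∅ = 0)
    (O : Finset α) :
    ∃ δ : α → ℝ, (∑ x ∈ O, δ x = f O) ∧ ∀ E ⊆ O, ∑ x ∈ E, δ x ≤ f E := by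
  induction O using Finset.induction_on with
  | empty =>
    refine ⟨fun _ => 0, by simp [hempty], ?_⟩
    intro E hE
    rw [Finset.subset_empty.mp hE]
    simp [hempty]
  | @insert x O hx ih =>
    obtain ⟨δ, hsum, hle⟩ := ih
    refine ⟨Function.update δ x (f (insert x O) - f O), ?_, ?_⟩
    · rw [sum_insert hx, Function.update_self,
        Finset.sum_congr rfl (fun y hy => Function.update_of_ne (ne_of_mem_of_not_mem hy hx) _ _),
        hsum]
      ring
    · intro E hE
      by_cases hxE : x ∈ E
      · have hE' : E.erase x ⊆ O := by
          intro y hy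
          rcases Finset.mem_erase.mp hy with ⟨h1, h2⟩
          rcases Finset.mem_insert.mp (hE h2) with h3 | h3
          · exact absurd h3 h1
          · exact h3
        have hsum2 : ∑ y ∈ E, Function.update δ x (f (insert x O) - f O) y
            = (f (insert x O) - f O) + ∑ y ∈ E.erase x, δ y := by
          rw [← Finset.add_sum_erase E _ hxE, Function.update_self]
          congr 1
          exact Finset.sum_congr rfl fun y hy =>
            Function.update_of_ne (Finset.mem_erase.mp hy).1 _ _
        rw [hsum2]
        have h1 := hle _ hE'
        have h2 := hsub (E.erase x) O hE' x hx
        rw [Finset.insert_erase hxE] at h2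
        linarith
      · have hEO : E ⊆ O := by
          intro y hy
          rcases Finset.mem_insert.mp (hE hy) with h3 | h3
          · subst h3; exact absurd hy hxE
          · exact h3
        calc ∑ y ∈ E, Function.update δ x (f (insert x O) - f O) y
            = ∑ y ∈ E, δ y :=
              Finset.sum_congr rfl fun y hy =>
                Function.update_of_ne (fun h => hxE (by rw [← h]; exact hy)) _ _
          _ ≤ f E := hle E hEO

/-- overall distributed approximation factor for monotone submodular
maximization: if, for every realization of the random partition, a post-processing step
returns `S(g) ⊆ ⋃_i ALG(T_i(g))` of size at most `k` with
`f(S(g)) ≥ (1−1/e)·f(OPT ∩ ⋃_i ALG(T_i(g)))`, then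
`𝔼[max(f(S), max_i f(ALG(T_i)))] ≥ ((1−1/e)/(1+(1−1/e)(1+β)))·f(OPT)`;
in particular for `β = 1` it is at least `0.27·f(OPT)`. -/
theorem stmt_7 {α : Type*} [DecidableEq α] [Fintype α] {m : ℕ} [NeZero m]
    (f : Finset α → ℝ)
    (hsub : ∀ X Y : Finset α, X ⊆ Y → ∀ x, x ∉ Y →
      f (insert x Y) - f Y ≤ f (insert x X) - f X)
    (hmono : ∀ X Y : Finset α, X ⊆ Y → f X ≤ f Y)
    (hnonneg : ∀ S : Finset α, 0 ≤ f S)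
    (hempty : f ∅ = 0)
    (k : ℕ) (hk : 1 ≤ k) (β : ℝ) (hβ : 0 < β)
    (OPT : Finset α) (hOPTcard : OPT.card ≤ k)
    (ALG : Finset α → Finset α)
    (hALGsub : ∀ T, ALG T ⊆ T)
    (hALGcard : ∀ T, (ALG T).card ≤ k)
    (hALGind : ∀ T : Finset α, ∀ x ∈ T \ ALG T, ALG (T.erase x) = ALG T)
    (hALGmarg : ∀ T : Finset α, ∀ x ∈ T \ ALG T,
      f (insert x (ALG T)) - f (ALG T) ≤ β * f (ALG T) / k)
    (S : (α → Fin m) → Finset α)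
    (hSsub : ∀ g, S g ⊆ Finset.univ.biUnion fun i => ALG (part g i))
    (hScard : ∀ g, (S g).card ≤ k)
    (hSval : ∀ g, f (S g) ≥ (1 - 1 / Real.exp 1) *
      f (OPT ∩ Finset.univ.biUnion fun i => ALG (part g i))) :
    (∑ g : α → Fin m,
        max (f (S g)) (Finset.univ.sup' Finset.univ_nonempty fun i => f (ALG (part g i)))) /
        (m : ℝ) ^ Fintype.card α
      ≥ ((1 - 1 / Real.exp 1) / (1 + (1 - 1 / Real.exp 1) * (1 + β))) * f OPT ∧
    (β = 1 →
      (∑ g : α → Fin m,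
          max (f (S g)) (Finset.univ.sup' Finset.univ_nonempty fun i => f (ALG (part g i)))) /
          (m : ℝ) ^ Fintype.card α
        ≥ 0.27 * f OPT) := by
  have hexp : (2.7182818283 : ℝ) < Real.exp 1 := Real.exp_one_gt_d9
  have hexp0 : (0:ℝ) < Real.exp 1 := Real.exp_pos 1
  set lam : ℝ := 1 - 1 / Real.exp 1 with hlam_def
  have hlam_lb : (27:ℝ)/46 ≤ lam := by
    have h1 : 1 / Real.exp 1 ≤ 19/46 := by
      rw [div_le_div_iff₀ hexp0 (by norm_num)]
      nlinarith
    rw [hlam_def]; linarith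
  have hlam_pos : 0 < lam := lt_of_lt_of_le (by norm_num) hlam_lb
  have hm : 0 < m := Nat.pos_of_ne_zero (NeZero.ne m)
  have hW : (0:ℝ) < (m : ℝ) ^ Fintype.card α := by positivity
  have hk0 : (0:ℝ) < (k:ℝ) := by exact_mod_cast Nat.lt_of_lt_of_le Nat.zero_lt_one hk
  set i0 : Fin m := ⟨0, hm⟩ with hi0
  -- the weights δ
  obtain ⟨δ, hδsum, hδle⟩ := chain_delta f hsub hmono hempty OPT
  -- abbreviations (as plain definitions, used consistently below)
  set C : (α → Fin m) → Finset α :=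
    fun g => OPT ∩ Finset.univ.biUnion fun i => ALG (part g i) with hCdef
  set D : (α → Fin m) → Finset α :=
    fun g => OPT.filter fun x => x ∉ ALG (insert x ((part g i0).erase x)) with hDdef
  set M : (α → Fin m) → ℝ :=
    fun g => Finset.univ.sup' Finset.univ_nonempty fun i => f (ALG (part g i)) with hMdef
  set SX : ℝ := ∑ g : α → Fin m, max (f (S g)) (M g) with hSXdef
  -- pointwise: δ-sums below f
  have h_pointC : ∀ g, ∑ y ∈ C g, δ y ≤ f (C g) := fun g => hδle _ inter_subset_left
  have h_pointD : ∀ g, ∑ y ∈ D g, δ y ≤ f (D g) := fun g => hδle _ (filter_subset _ _)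
  -- pointwise: f(D g) ≤ (1+β) M g
  have h_fD : ∀ g, f (D g) ≤ (1 + β) * M g := by
    intro g
    have hmarg : ∀ x ∈ D g,
        f (insert x (ALG (part g i0))) - f (ALG (part g i0)) ≤ β * f (ALG (part g i0)) / k := by
      intro x hxD
      obtain ⟨hxO, hxr⟩ := mem_filter.mp hxD
      by_cases hxs : x ∈ part g i0
      · rw [Finset.insert_erase hxs] at hxr
        exact hALGmarg (part g i0) x (mem_sdiff.mpr ⟨hxs, hxr⟩)
      · rw [Finset.erase_eq_self.mpr hxs] at hxr
        have hxU : x ∈ insert x (part g i0) \ ALG (insert x (part g i0)) :=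
          mem_sdiff.mpr ⟨mem_insert_self _ _, hxr⟩
        have heq : ALG ((insert x (part g i0)).erase x) = ALG (insert x (part g i0)) :=
          hALGind _ x hxU
        rw [Finset.erase_insert hxs] at heq
        have hb := hALGmarg (insert x (part g i0)) x hxU
        rw [← heq] at hb
        exact hb
    have hDk : ((D g).card : ℝ) ≤ (k:ℝ) := by
      exact_mod_cast le_trans (card_le_card (filter_subset _ _)) hOPTcard
    have hA0 : 0 ≤ f (ALG (part g i0)) := hnonneg _
    have hAM : f (ALG (part g i0)) ≤ M g := by
      rw [hMdef]
      exact le_sup' (fun i => f (ALG (part g i))) (mem_univ i0)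
    have h1 : f (D g) ≤ f (ALG (part g i0) ∪ D g) := hmono _ _ subset_union_right
    have h2 := union_chain f hsub hmono (ALG (part g i0)) (D g)
    have h3 : ∑ x ∈ D g, (f (insert x (ALG (part g i0))) - f (ALG (part g i0)))
        ≤ (D g).card * (β * f (ALG (part g i0)) / k) := by
      calc ∑ x ∈ D g, (f (insert x (ALG (part g i0))) - f (ALG (part g i0)))
          ≤ ∑ _x ∈ D g, β * f (ALG (part g i0)) / k := sum_le_sum hmarg
        _ = (D g).card * (β * f (ALG (part g i0)) / k) := by
            rw [sum_const, nsmul_eq_mul]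
    have h4 : ((D g).card : ℝ) * (β * f (ALG (part g i0)) / k) ≤ β * f (ALG (part g i0)) := by
      calc ((D g).card : ℝ) * (β * f (ALG (part g i0)) / k)
          ≤ (k:ℝ) * (β * f (ALG (part g i0)) / k) := by
            apply mul_le_mul_of_nonneg_right hDk
            positivity
        _ = β * f (ALG (part g i0)) := by field_simp
    nlinarith [mul_le_mul_of_nonneg_left hAM (by linarith : (0:ℝ) ≤ 1 + β)]
  -- the counting identity
  have hcount : ∀ x ∈ OPT,
      (∑ g : α → Fin m, (if x ∈ C g then (1:ℝ) else 0))
        + (∑ g : α → Fin m, (if x ∈ D g then (1:ℝ) else 0))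
      = (m : ℝ) ^ Fintype.card α := by
    intro x hxO
    set Φ : (α → Fin m) → (α → Fin m) :=
      fun g a => if a = x then g x else (Equiv.swap i0 (g x)) (g a) with hΦdef
    have hΦx : ∀ g, Φ g x = g x := fun g => by simp [hΦdef]
    have hΦinv : Function.Involutive Φ := by
      intro g; funext a
      by_cases h : a = x
      · subst h; simp [hΦdef]
      · simp [hΦdef, h, Equiv.swap_apply_self]
    have hset : ∀ g : α → Fin m, insert x ((part (Φ g) i0).erase x) = part g (g x) := by
      intro g
      ext a
      simp only [mem_insert, mem_erase, part, mem_filter, mem_univ, true_and]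
      constructor
      · rintro (rfl | ⟨hax, hswap⟩)
        · rfl
        · have h1 : Equiv.swap i0 (g x) (g a) = i0 := by
            simpa [hΦdef, hax] using hswap
          have h2 : Equiv.swap i0 (g x) (g a) = Equiv.swap i0 (g x) (g x) := by
            rw [h1, Equiv.swap_apply_right]
          exact (Equiv.swap i0 (g x)).injective h2
      · intro hax
        by_cases h : a = x
        · exact Or.inl h
        · refine Or.inr ⟨h, ?_⟩
          simp [hΦdef, h, hax, Equiv.swap_apply_right]
    have hPC : ∀ g : α → Fin m, x ∈ C g ↔ x ∈ ALG (part g (g x)) := by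
      intro g
      rw [hCdef]
      simp only [mem_inter, mem_biUnion, mem_univ, true_and]
      constructor
      · rintro ⟨-, i, hi⟩
        have : x ∈ part g i := hALGsub _ hi
        have : g x = i := by simpa [part] using this
        rwa [this]
      · intro h
        exact ⟨hxO, g x, h⟩
    have hbij : ∑ g : α → Fin m, (if x ∈ ALG (part g (g x)) then (1:ℝ) else 0)
        = ∑ g : α → Fin m, (if x ∈ ALG (insert x ((part g i0).erase x)) then (1:ℝ) else 0) := by
      apply Fintype.sum_bijective Φ hΦinv.bijective
      intro g
      rw [hset g]
    have h1 : ∑ g : α → Fin m, (if x ∈ C g then (1:ℝ) else 0)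
        = ∑ g : α → Fin m, (if x ∈ ALG (insert x ((part g i0).erase x)) then (1:ℝ) else 0) := by
      rw [← hbij]
      exact Finset.sum_congr rfl fun g _ => by simp only [hPC g]
    have h2 : ∀ g : α → Fin m, (if x ∈ D g then (1:ℝ) else 0)
        = 1 - (if x ∈ ALG (insert x ((part g i0).erase x)) then (1:ℝ) else 0) := by
      intro g
      have : x ∈ D g ↔ x ∉ ALG (insert x ((part g i0).erase x)) := by
        rw [hDdef]; simp [hxO]
      by_cases h : x ∈ ALG (insert x ((part g i0).erase x)) <;> simp [this, h]
    rw [h1, Finset.sum_congr rfl fun g _ => h2 g, Finset.sum_sub_distrib]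
    have hcard : ∑ _g : α → Fin m, (1:ℝ) = (m : ℝ) ^ Fintype.card α := by
      rw [sum_const, nsmul_eq_mul, mul_one, card_univ, Fintype.card_fun, Fintype.card_fin]
      push_cast
      ring
    rw [hcard]
    ring
  -- the master equality
  have hmaster : (m : ℝ) ^ Fintype.card α * f OPT
      = (∑ g : α → Fin m, ∑ y ∈ C g, δ y) + (∑ g : α → Fin m, ∑ y ∈ D g, δ y) := by
    have hCsum : ∀ g, ∑ y ∈ C g, δ y = ∑ y ∈ OPT, (if y ∈ C g then δ y else 0) := by
      intro g
      rw [Finset.sum_ite_mem, Finset.inter_eq_right.mpr inter_subset_left]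
    have hDsum : ∀ g, ∑ y ∈ D g, δ y = ∑ y ∈ OPT, (if y ∈ D g then δ y else 0) := by
      intro g
      rw [Finset.sum_ite_mem, Finset.inter_eq_right.mpr (filter_subset _ _)]
    rw [Finset.sum_congr rfl fun g _ => hCsum g, Finset.sum_congr rfl fun g _ => hDsum g,
      Finset.sum_comm, Finset.sum_comm (s := univ)]
    rw [← Finset.sum_add_distrib]
    have : ∀ y ∈ OPT,
        ((∑ g : α → Fin m, if y ∈ C g then δ y else 0)
          + ∑ g : α → Fin m, if y ∈ D g then δ y else 0)
        = δ y * ((m : ℝ) ^ Fintype.card α) := by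
      intro y hy
      have e1 : (∑ g : α → Fin m, if y ∈ C g then δ y else 0)
          = δ y * ∑ g : α → Fin m, (if y ∈ C g then (1:ℝ) else 0) := by
        rw [mul_sum]
        exact Finset.sum_congr rfl fun g _ => by split <;> ring
      have e2 : (∑ g : α → Fin m, if y ∈ D g then δ y else 0)
          = δ y * ∑ g : α → Fin m, (if y ∈ D g then (1:ℝ) else 0) := by
        rw [mul_sum]
        exact Finset.sum_congr rfl fun g _ => by split <;> ring
      rw [e1, e2, ← mul_add, hcount y hy]
    rw [Finset.sum_congr rfl this, ← Finset.sum_mul, hδsum]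
    ring
  -- summed inequalities
  have hC_le : (∑ g : α → Fin m, ∑ y ∈ C g, δ y) ≤ ∑ g : α → Fin m, f (C g) :=
    Finset.sum_le_sum fun g _ => h_pointC g
  have hD_le : (∑ g : α → Fin m, ∑ y ∈ D g, δ y)
      ≤ (1 + β) * ∑ g : α → Fin m, M g := by
    rw [mul_sum]
    exact Finset.sum_le_sum fun g _ => le_trans (h_pointD g) (h_fD g)
  have hS_le : lam * (∑ g : α → Fin m, f (C g)) ≤ SX := by
    rw [hSXdef, mul_sum]
    apply Finset.sum_le_sum
    intro g _
    exact le_trans (hSval g) (le_max_left _ _)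
  have hM_le : (∑ g : α → Fin m, M g) ≤ SX := by
    rw [hSXdef]
    exact Finset.sum_le_sum fun g _ => le_max_right _ _
  -- assemble the main bound
  have hd : (0:ℝ) < 1 + lam * (1 + β) := by nlinarith
  have hkey : lam * ((m : ℝ) ^ Fintype.card α * f OPT) ≤ (1 + lam * (1 + β)) * SX := by
    have t1 : lam * ((m : ℝ) ^ Fintype.card α * f OPT)
        ≤ lam * ((∑ g : α → Fin m, f (C g)) + (1 + β) * ∑ g : α → Fin m, M g) := by
      apply mul_le_mul_of_nonneg_left _ hlam_pos.le
      rw [hmaster]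
      linarith
    have t2 : lam * (1 + β) * (∑ g : α → Fin m, M g) ≤ lam * (1 + β) * SX := by
      apply mul_le_mul_of_nonneg_left hM_le
      positivity
    nlinarith
  have hmain : (∑ g : α → Fin m,
        max (f (S g)) (Finset.univ.sup' Finset.univ_nonempty fun i => f (ALG (part g i)))) /
        (m : ℝ) ^ Fintype.card α
      ≥ (lam / (1 + lam * (1 + β))) * f OPT := by
    rw [ge_iff_le, le_div_iff₀ hW]
    refine le_of_mul_le_mul_left ?_ hd
    have hne : (1 + lam * (1 + β)) ≠ 0 := ne_of_gt hd
    have heq : (1 + lam * (1 + β)) * (lam / (1 + lam * (1 + β)) * f OPT * ((m : ℝ) ^ Fintype.card α))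
        = lam * ((m : ℝ) ^ Fintype.card α * f OPT) := by
      field_simp
    rw [heq]
    exact hkey
  refine ⟨hmain, ?_⟩
  intro hβ1
  subst hβ1
  have hconst : (0.27 : ℝ) ≤ lam / (1 + lam * (1 + 1)) := by
    rw [le_div_iff₀ hd]
    nlinarith
  have hOPT0 : 0 ≤ f OPT := hnonneg OPT
  calc (0.27 : ℝ) * f OPT ≤ (lam / (1 + lam * (1 + 1))) * f OPT :=
        mul_le_mul_of_nonneg_right hconst hOPT0
    _ ≤ _ := hmain
end

section
/- Let f be a non-negative submodular set function on a finite ground set N with f(∅) = 0, let k ≥ 1 and β > 0, let OPT ⊆ N with |OPT| ≤ k, and let ALG be a β-nice algorithm for f with output size bound k' = k. Consider a random partition of N into m parts, and suppose that for every assignment g a set S(g) ⊆ ALG(T_1(g)) ∪ … ∪ ALG(T_m(g)) with |S(g)| ≤ k satisfies f(S(g)) ≥ (1/e)·f( OPT ∩ (ALG(T_1(g)) ∪ … ∪ ALG(T_m(g))) ). Then 𝔼[ max{ f(S), max_{1 ≤ i ≤ m} f(ALG(T_i)) } ] ≥ ( ((1 − 1/m)/e) / (1 + (1 + β)/e) )·f(OPT).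 -/
open Finset

namespace Stmt8Aux

variable {α : Type*} [DecidableEq α]

def wSum (w : α → Finset α → ℝ) : List α → ℝ
  | [] => 0
  | a :: t => w a t.toFinset + wSum w t

@[simp] lemma wSum_nil (w : α → Finset α → ℝ) : wSum w [] = 0 := rfl

@[simp] lemma wSum_cons (w : α → Finset α → ℝ) (a : α) (t : List α) :
    wSum w (a :: t) = w a t.toFinset + wSum w t := rfl

lemma wSum_le {w₁ w₂ : α → Finset α → ℝ}
    (h : ∀ a R, a ∉ R → w₁ a R ≤ w₂ a R) :
    ∀ l : List α, l.Nodup → wSum w₁ l ≤ wSum w₂ l := by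
  intro l
  induction l with
  | nil => intro _; simp
  | cons a t ih =>
    intro hnd
    rcases List.nodup_cons.1 hnd with ⟨ha, ht⟩
    have ha' : a ∉ t.toFinset := by simpa using ha
    simpa using add_le_add (h a t.toFinset ha') (ih ht)

lemma wSum_add (w₁ w₂ : α → Finset α → ℝ) (l : List α) :
    wSum (fun a R => w₁ a R + w₂ a R) l = wSum w₁ l + wSum w₂ l := by
  induction l with
  | nil => simp
  | cons a t ih => simp [ih]; ring

lemma wSum_sub (w₁ w₂ : α → Finset α → ℝ) (l : List α) :
    wSum (fun a R => w₁ a R - w₂ a R) l = wSum w₁ l - wSum w₂ l := by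
  induction l with
  | nil => simp
  | cons a t ih => simp [ih]; ring

lemma wSum_smul (c : ℝ) (w : α → Finset α → ℝ) (l : List α) :
    wSum (fun a R => c * w a R) l = c * wSum w l := by
  induction l with
  | nil => simp
  | cons a t ih => simp [ih]; ring

lemma wSum_sum {γ : Type*} (s : Finset γ) (w : γ → α → Finset α → ℝ) (l : List α) :
    ∑ x ∈ s, wSum (w x) l = wSum (fun a R => ∑ x ∈ s, w x a R) l := by
  induction l with
  | nil => simp
  | cons a t ih => simp [Finset.sum_add_distrib, ih]

lemma wSum_congr {w₁ w₂ : α → Finset α → ℝ} (h : ∀ a R, w₁ a R = w₂ a R) (l : List α) :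
    wSum w₁ l = wSum w₂ l := by
  induction l with
  | nil => simp
  | cons a t ih => simp [h, ih]

lemma wSum_tele (f : Finset α → ℝ) (W : Finset α) :
    ∀ l : List α,
      wSum (fun a R => f (insert a (R ∪ W)) - f (R ∪ W)) l = f (l.toFinset ∪ W) - f W := by
  intro l
  induction l with
  | nil => simp
  | cons a t ih =>
    simp only [wSum_cons, ih, List.toFinset_cons, Finset.insert_union]
    ring

lemma wSum_le_const {w : α → Finset α → ℝ} {c : ℝ} (h : ∀ a R, w a R ≤ c) (l : List α) :
    wSum w l ≤ l.length * c := by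
  induction l with
  | nil => simp
  | cons a t ih =>
    simp only [wSum_cons, List.length_cons]
    push_cast
    nlinarith [ih, h a t.toFinset]

lemma sub_union (f : Finset α → ℝ)
    (hsub : ∀ X Y : Finset α, X ⊆ Y → ∀ x, x ∉ Y →
      f (insert x Y) - f Y ≤ f (insert x X) - f X) :
    ∀ (D X Y : Finset α), X ⊆ Y → (∀ d ∈ D, d ∉ Y) →
      f (Y ∪ D) + f X ≤ f (X ∪ D) + f Y := by
  intro D
  induction D using Finset.induction_on with
  | empty => intro X Y hXY _; simp [add_comm]
  | insert d D hd ih =>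
    intro X Y hXY hD
    have hdY : d ∉ Y := hD d (Finset.mem_insert_self d D)
    have hIH := ih X Y hXY (fun e he => hD e (Finset.mem_insert_of_mem he))
    have hsub' := hsub (X ∪ D) (Y ∪ D) (Finset.union_subset_union_left hXY) d
      (by simp [hdY, hd])
    have h1 : Y ∪ insert d D = insert d (Y ∪ D) := by simp [Finset.union_insert]
    have h2 : X ∪ insert d D = insert d (X ∪ D) := by simp [Finset.union_insert]
    rw [h1, h2]
    linarith

lemma superadd (f : Finset α → ℝ)
    (hsub : ∀ X Y : Finset α, X ⊆ Y → ∀ x, x ∉ Y →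
      f (insert x Y) - f Y ≤ f (insert x X) - f X)
    (OPT : Finset α) {m : ℕ} (A : Fin m → Finset α)
    (hdisj : ∀ i j, i ≠ j → Disjoint (A i) (A j)) :
    ∀ s : Finset (Fin m),
      f (OPT ∪ s.biUnion A) + (s.card : ℝ) * f OPT ≤ (∑ i ∈ s, f (OPT ∪ A i)) + f OPT := by
  intro s
  induction s using Finset.induction_on with
  | empty => simp
  | insert i s hi ih =>
    have key := sub_union f hsub (A i \ OPT) OPT (OPT ∪ s.biUnion A)
      Finset.subset_union_left ?_
    · have e1 : OPT ∪ A i \ OPT = OPT ∪ A i := Finset.union_sdiff_self_eq_union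
      have e2 : OPT ∪ s.biUnion A ∪ A i \ OPT = OPT ∪ (insert i s).biUnion A := by
        ext a
        simp only [Finset.mem_union, Finset.mem_sdiff, Finset.mem_biUnion,
          Finset.mem_insert]
        constructor
        · rintro ((h | ⟨j, hj, hja⟩) | ⟨ha, _⟩)
          · exact Or.inl h
          · exact Or.inr ⟨j, Or.inr hj, hja⟩
          · exact Or.inr ⟨i, Or.inl rfl, ha⟩
        · rintro (h | ⟨j, (rfl | hj), hja⟩)
          · exact Or.inl (Or.inl h)
          · by_cases hO : a ∈ OPT
            · exact Or.inl (Or.inl hO)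
            · exact Or.inr ⟨hja, hO⟩
          · exact Or.inl (Or.inr ⟨j, hj, hja⟩)
      rw [e1, e2] at key
      rw [Finset.sum_insert hi, Finset.card_insert_of_notMem hi]
      push_cast
      linarith
    · intro d hd
      simp only [Finset.mem_sdiff] at hd
      simp only [Finset.mem_union, Finset.mem_biUnion]
      rintro (h | ⟨j, hj, hja⟩)
      · exact hd.2 h
      · have hij : i ≠ j := by rintro rfl; exact hi hj
        exact (Finset.disjoint_left.1 (hdisj i j hij)) hd.1 hja

lemma invol_sum {α : Type*} [Fintype α] [DecidableEq α] {m : ℕ} (x : α)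
    (F : (α → Fin m) → ℝ) :
    ∑ g : α → Fin m, ∑ i : Fin m, F (Function.update g x i)
      = (m : ℝ) * ∑ g : α → Fin m, F g := by
  have hinv : Function.Involutive
      (fun p : (α → Fin m) × Fin m => (Function.update p.1 x p.2, p.1 x)) := by
    rintro ⟨g, i⟩
    simp [Function.update_idem, Function.update_eq_self]
  have h1 : ∑ p : (α → Fin m) × Fin m, F (Function.update p.1 x p.2)
      = ∑ p : (α → Fin m) × Fin m, F p.1 := by
    have := Equiv.sum_comp hinv.toPerm (fun p : (α → Fin m) × Fin m => F p.1)
    simpa [Function.Involutive.toPerm, Function.Involutive.coe_toPerm] using this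
  calc ∑ g : α → Fin m, ∑ i : Fin m, F (Function.update g x i)
      = ∑ p : (α → Fin m) × Fin m, F (Function.update p.1 x p.2) := by
        rw [Fintype.sum_prod_type]
    _ = ∑ p : (α → Fin m) × Fin m, F p.1 := h1
    _ = ∑ g : α → Fin m, ∑ _i : Fin m, F g := by rw [Fintype.sum_prod_type]
    _ = (m : ℝ) * ∑ g : α → Fin m, F g := by
        rw [Finset.mul_sum]
        exact Finset.sum_congr rfl (fun g _ => by simp [Finset.sum_const, mul_comm])

lemma step1 (f : Finset α → ℝ)
    (hsub : ∀ X Y : Finset α, X ⊆ Y → ∀ x, x ∉ Y →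
      f (insert x Y) - f Y ≤ f (insert x X) - f X)
    (hnonneg : ∀ S : Finset α, 0 ≤ f S)
    (OPT Cfin : Finset α) :
    ∀ l : List α, l.Nodup → l.toFinset ⊆ OPT →
      wSum (fun a R => if a ∈ Cfin then f (insert a R) - f R else 0) l
        ≤ f (OPT ∩ Cfin ∩ l.toFinset) := by
  intro l
  induction l with
  | nil => intro _ _; simpa [wSum] using hnonneg _
  | cons a t ih =>
    intro hnd hsubO
    rcases List.nodup_cons.1 hnd with ⟨ha, ht⟩
    have ha' : a ∉ t.toFinset := by simpa using ha
    have hsubO' : t.toFinset ⊆ OPT := by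
      intro b hb
      exact hsubO (by simp [hb])
    have haO : a ∈ OPT := hsubO (by simp)
    have hIH := ih ht hsubO'
    by_cases haC : a ∈ Cfin
    · have hKset : OPT ∩ Cfin ∩ (a :: t).toFinset
          = insert a (OPT ∩ Cfin ∩ t.toFinset) := by
        ext b
        simp only [List.toFinset_cons, Finset.mem_inter, Finset.mem_insert]
        constructor
        · rintro ⟨⟨hbO, hbC⟩, (rfl | hbT)⟩
          · exact Or.inl rfl
          · exact Or.inr ⟨⟨hbO, hbC⟩, hbT⟩
        · rintro (rfl | ⟨⟨hbO, hbC⟩, hbT⟩)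
          · exact ⟨⟨haO, haC⟩, Or.inl rfl⟩
          · exact ⟨⟨hbO, hbC⟩, Or.inr hbT⟩
      have hkey := hsub (OPT ∩ Cfin ∩ t.toFinset) t.toFinset
        (by intro b hb; simp only [Finset.mem_inter] at hb; exact hb.2) a ha'
      rw [hKset]
      simp only [wSum_cons, haC, if_true]
      linarith
    · have hKset : OPT ∩ Cfin ∩ (a :: t).toFinset = OPT ∩ Cfin ∩ t.toFinset := by
        ext b
        simp only [List.toFinset_cons, Finset.mem_inter, Finset.mem_insert]
        constructor
        · rintro ⟨⟨hbO, hbC⟩, (rfl | hbT)⟩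
          · exact absurd hbC haC
          · exact ⟨⟨hbO, hbC⟩, hbT⟩
        · rintro ⟨⟨hbO, hbC⟩, hbT⟩
          exact ⟨⟨hbO, hbC⟩, Or.inr hbT⟩
      rw [hKset]
      simp only [wSum_cons, haC, if_false]
      linarith

section WithFin
variable [Fintype α] {m : ℕ}

lemma mem_part {g : α → Fin m} {a : α} {i : Fin m} : a ∈ part g i ↔ g a = i := by
  simp [part]

lemma part_disjoint (g : α → Fin m) {i j : Fin m} (hij : i ≠ j) :
    Disjoint (part g i) (part g j) := by
  rw [Finset.disjoint_left]
  intro a hai haj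
  rw [mem_part] at hai haj
  exact hij (hai ▸ haj)

lemma part_update (g : α → Fin m) (x : α) (i : Fin m) :
    part (Function.update g x i) i = insert x (part g i) := by
  ext a
  by_cases hax : a = x
  · subst hax
    simp [part, Function.update_self]
  · simp [part, Function.update_of_ne hax, hax]

lemma ALG_update (ALG : Finset α → Finset α)
    (hALGind : ∀ T : Finset α, ∀ x ∈ T \ ALG T, ALG (T.erase x) = ALG T)
    (g : α → Fin m) (x : α) (i : Fin m)
    (h : x ∉ ALG (part (Function.update g x i) i)) :
    ALG (part (Function.update g x i) i) = ALG (part g i) := by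
  by_cases hgx : g x = i
  · have : Function.update g x i = g := by
      rw [← hgx]; exact Function.update_eq_self x g
    rw [this]
  · have hxP : x ∉ part g i := by
      rw [mem_part]; exact hgx
    have hmem : x ∈ part (Function.update g x i) i := by
      rw [part_update]; exact Finset.mem_insert_self x _
    have := hALGind (part (Function.update g x i) i) x (Finset.mem_sdiff.2 ⟨hmem, h⟩)
    rw [part_update, Finset.erase_insert (by simpa using hxP)] at this
    rw [part_update, ← this]

lemma mem_union_parts (ALG : Finset α → Finset α)
    (hALGsub : ∀ T, ALG T ⊆ T) (g : α → Fin m) (a : α) :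
    (a ∈ Finset.univ.biUnion fun i => ALG (part g i)) ↔ a ∈ ALG (part g (g a)) := by
  constructor
  · intro h
    rcases Finset.mem_biUnion.1 h with ⟨i, _, hi⟩
    have : g a = i := mem_part.1 (hALGsub _ hi)
    rwa [this]
  · intro h
    exact Finset.mem_biUnion.2 ⟨g a, Finset.mem_univ _, h⟩

end WithFin

lemma wSum_add_sub {α : Type*} [DecidableEq α] (w₁ w₂ w₃ : α → Finset α → ℝ) (l : List α) :
    wSum (fun a R => w₁ a R + w₂ a R - w₃ a R) l = wSum w₁ l + wSum w₂ l - wSum w₃ l := by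
  induction l with
  | nil => simp
  | cons a t ih => simp [ih]; ring

lemma core {α : Type*} [DecidableEq α] [Fintype α] {m : ℕ} [NeZero m]
    (f : Finset α → ℝ)
    (hsub : ∀ X Y : Finset α, X ⊆ Y → ∀ x, x ∉ Y →
      f (insert x Y) - f Y ≤ f (insert x X) - f X)
    (hnonneg : ∀ S : Finset α, 0 ≤ f S)
    (hempty : f ∅ = 0)
    (k : ℕ) (hk : 1 ≤ k) (β : ℝ) (hβ : 0 < β)
    (OPT : Finset α) (hOPTcard : OPT.card ≤ k)
    (ALG : Finset α → Finset α)
    (hALGsub : ∀ T, ALG T ⊆ T)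
    (hALGind : ∀ T : Finset α, ∀ x ∈ T \ ALG T, ALG (T.erase x) = ALG T)
    (hALGmarg : ∀ T : Finset α, ∀ x ∈ T \ ALG T,
      f (insert x (ALG T)) - f (ALG T) ≤ β * f (ALG T) / k) :
    (1 - 1 / (m : ℝ)) * ((m : ℝ) ^ Fintype.card α) * f OPT
      ≤ (∑ g : α → Fin m, f (OPT ∩ Finset.univ.biUnion fun i => ALG (part g i)))
        + (1 + β) * ∑ g : α → Fin m,
            Finset.univ.sup' Finset.univ_nonempty fun i => f (ALG (part g i)) := by
  classical
  set l : List α := OPT.toList with hl_def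
  have hlnd : l.Nodup := OPT.nodup_toList
  have hlf : l.toFinset = OPT := Finset.toList_toFinset OPT
  have hllen : l.length = OPT.card := Finset.length_toList OPT
  have hm0 : (0:ℝ) < (m:ℝ) := by
    exact_mod_cast Nat.pos_of_ne_zero (NeZero.ne m)
  have hk0 : (0:ℝ) < (k:ℝ) := by exact_mod_cast hk
  set N : ℝ := (m:ℝ) ^ Fintype.card α with hN_def
  set P : ℝ := ∑ g : α → Fin m,
    wSum (fun a R => if a ∈ Finset.univ.biUnion (fun i => ALG (part g i))
      then (f (insert a R) - f R) else 0) l with hP_def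
  set Q : ℝ := ∑ g : α → Fin m,
    wSum (fun a R => if a ∈ Finset.univ.biUnion (fun i => ALG (part g i))
      then 0 else (f (insert a R) - f R)) l with hQ_def
  set FK : ℝ := ∑ g : α → Fin m,
    f (OPT ∩ Finset.univ.biUnion fun i => ALG (part g i)) with hFK_def
  set SM : ℝ := ∑ g : α → Fin m,
    Finset.univ.sup' Finset.univ_nonempty fun i => f (ALG (part g i)) with hSM_def
  have hcard : (Fintype.card (α → Fin m) : ℝ) = N := by
    rw [hN_def, Fintype.card_fun, Fintype.card_fin]
    push_cast
    ring
  have hDsum : wSum (fun a R => f (insert a R) - f R) l = f OPT := by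
    have h1 := wSum_tele f ∅ l
    simp only [Finset.union_empty] at h1
    rw [hlf, hempty] at h1
    linarith [h1]
  -- Step A : P + Q = N * f OPT
  have hPQ : P + Q = N * f OPT := by
    rw [hP_def, hQ_def, ← Finset.sum_add_distrib]
    have hg : ∀ g : α → Fin m,
        (wSum (fun a R => if a ∈ Finset.univ.biUnion (fun i => ALG (part g i))
            then (f (insert a R) - f R) else 0) l
          + wSum (fun a R => if a ∈ Finset.univ.biUnion (fun i => ALG (part g i))
            then 0 else (f (insert a R) - f R)) l) = f OPT := by
      intro g
      rw [← wSum_add]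
      rw [wSum_congr (w₂ := fun a R => f (insert a R) - f R)
        (fun a R => by by_cases h : a ∈ Finset.univ.biUnion (fun i => ALG (part g i)) <;>
          simp [h]) l]
      exact hDsum
    rw [Finset.sum_congr rfl (fun g _ => hg g), Finset.sum_const, Finset.card_univ,
      nsmul_eq_mul, hcard]
  -- Step B : P ≤ FK
  have hPF : P ≤ FK := by
    rw [hP_def, hFK_def]
    apply Finset.sum_le_sum
    intro g _
    have h1 := step1 f hsub hnonneg OPT (Finset.univ.biUnion fun i => ALG (part g i)) l
      hlnd (by rw [hlf])
    rw [hlf] at h1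
    have heq : OPT ∩ (Finset.univ.biUnion fun i => ALG (part g i)) ∩ OPT
        = OPT ∩ (Finset.univ.biUnion fun i => ALG (part g i)) := by
      ext b; simp only [Finset.mem_inter]; tauto
    rwa [heq] at h1
  -- membership characterization
  have hCiff : ∀ (h : α → Fin m) (a : α),
      (a ∈ Finset.univ.biUnion fun i => ALG (part h i)) ↔ a ∈ ALG (part h (h a)) :=
    fun h a => mem_union_parts ALG hALGsub h a
  -- Step C : the exchange identity
  have hmQ : ∑ g : α → Fin m, ∑ i : Fin m,
      wSum (fun a R => if a ∈ Finset.univ.biUnion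
          (fun j => ALG (part (Function.update g a i) j))
        then 0 else (f (insert a R) - f R)) l = (m:ℝ) * Q := by
    calc ∑ g : α → Fin m, ∑ i : Fin m,
        wSum (fun a R => if a ∈ Finset.univ.biUnion
            (fun j => ALG (part (Function.update g a i) j))
          then 0 else (f (insert a R) - f R)) l
        = ∑ g : α → Fin m, wSum (fun a R => ∑ i : Fin m,
            if a ∈ Finset.univ.biUnion (fun j => ALG (part (Function.update g a i) j))
            then 0 else (f (insert a R) - f R)) l :=
          Finset.sum_congr rfl (fun g _ => wSum_sum Finset.univ _ l)
      _ = wSum (fun a R => ∑ g : α → Fin m, ∑ i : Fin m,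
            if a ∈ Finset.univ.biUnion (fun j => ALG (part (Function.update g a i) j))
            then 0 else (f (insert a R) - f R)) l := wSum_sum Finset.univ _ l
      _ = wSum (fun a R => (m:ℝ) * ∑ g : α → Fin m,
            if a ∈ Finset.univ.biUnion (fun j => ALG (part g j))
            then 0 else (f (insert a R) - f R)) l := by
          apply wSum_congr
          intro a R
          exact invol_sum a (fun h => if a ∈ Finset.univ.biUnion (fun j => ALG (part h j))
            then 0 else (f (insert a R) - f R))
      _ = (m:ℝ) * wSum (fun a R => ∑ g : α → Fin m,
            if a ∈ Finset.univ.biUnion (fun j => ALG (part g j))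
            then 0 else (f (insert a R) - f R)) l := wSum_smul _ _ l
      _ = (m:ℝ) * Q := by rw [← wSum_sum Finset.univ _ l, hQ_def]
  -- Step D : pointwise bound for each g, i
  have hMbound : ∀ (g : α → Fin m) (i : Fin m), f (ALG (part g i))
      ≤ Finset.univ.sup' Finset.univ_nonempty fun j => f (ALG (part g j)) :=
    fun g i => Finset.le_sup' (f := fun j => f (ALG (part g j))) (Finset.mem_univ i)
  have hDstep : ∀ g : α → Fin m,
      (∑ i : Fin m, wSum (fun a R => if a ∈ Finset.univ.biUnion
          (fun j => ALG (part (Function.update g a i) j))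
        then 0 else (f (insert a R) - f R)) l)
      ≤ (1 + β) * (∑ i : Fin m, f (ALG (part g i))) + f OPT
        - wSum (fun a R => if a ∈ Finset.univ.biUnion (fun i => ALG (part g i))
            then (f (insert a R) - f R) else 0) l := by
    intro g
    have hper : ∀ i : Fin m,
        wSum (fun a R => if a ∈ Finset.univ.biUnion
            (fun j => ALG (part (Function.update g a i) j))
          then 0 else (f (insert a R) - f R)) l
        ≤ β * f (ALG (part g i))
          + (f OPT - (f (OPT ∪ ALG (part g i)) - f (ALG (part g i))))
          - wSum (fun a R => if a ∈ ALG (part g i) then (f (insert a R) - f R) else 0) l := by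
      intro i
      have hstep : wSum (fun a R => if a ∈ Finset.univ.biUnion
            (fun j => ALG (part (Function.update g a i) j))
          then 0 else (f (insert a R) - f R)) l
          ≤ wSum (fun a R =>
              (if a ∈ ALG (part g i) then 0 else β * f (ALG (part g i)) / k)
              + ((f (insert a R) - f R)
                - (f (insert a (R ∪ ALG (part g i))) - f (R ∪ ALG (part g i))))
              - (if a ∈ ALG (part g i) then (f (insert a R) - f R) else 0)) l := by
        apply wSum_le _ l hlnd
        intro a R haR
        by_cases hC1 : a ∈ Finset.univ.biUnion
            (fun j => ALG (part (Function.update g a i) j))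
        · simp only [hC1, if_true]
          by_cases hA : a ∈ ALG (part g i)
          · have hzero : insert a (R ∪ ALG (part g i)) = R ∪ ALG (part g i) :=
              Finset.insert_eq_self.2 (Finset.mem_union_right _ hA)
            simp [hA, hzero]
          · have hnn : 0 ≤ β * f (ALG (part g i)) / k :=
              div_nonneg (mul_nonneg hβ.le (hnonneg _)) hk0.le
            have hmono := hsub R (R ∪ ALG (part g i)) Finset.subset_union_left a
              (by simp [haR, hA])
            simp only [hA, if_false]
            linarith
        · have hga : (Function.update g a i) a = i := Function.update_self a i g
          have hnot : a ∉ ALG (part (Function.update g a i) i) := by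
            intro hmem
            exact hC1 ((hCiff _ a).2 (by rwa [hga]))
          have hmarg0 := hALGmarg (part (Function.update g a i) i) a
            (Finset.mem_sdiff.2 ⟨by rw [part_update]; exact Finset.mem_insert_self a _, hnot⟩)
          have hEq := ALG_update ALG hALGind g a i hnot
          rw [hEq] at hmarg0
          have hA : a ∉ ALG (part g i) := by rw [← hEq]; exact hnot
          have hmono := hsub (ALG (part g i)) (R ∪ ALG (part g i))
            Finset.subset_union_right a (by simp [haR, hA])
          simp only [hC1, if_false, hA]
          linarith
      have hsplit := wSum_add_sub
        (fun a R => if a ∈ ALG (part g i) then 0 else β * f (ALG (part g i)) / k)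
        (fun a R => (f (insert a R) - f R)
          - (f (insert a (R ∪ ALG (part g i))) - f (R ∪ ALG (part g i))))
        (fun a R => if a ∈ ALG (part g i) then (f (insert a R) - f R) else 0) l
      rw [hsplit] at hstep
      have hS2 : wSum (fun a R => (f (insert a R) - f R)
          - (f (insert a (R ∪ ALG (part g i))) - f (R ∪ ALG (part g i)))) l
          = f OPT - (f (OPT ∪ ALG (part g i)) - f (ALG (part g i))) := by
        rw [wSum_sub, hDsum, wSum_tele, hlf]
      rw [hS2] at hstep
      have hnn : 0 ≤ β * f (ALG (part g i)) / k :=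
        div_nonneg (mul_nonneg hβ.le (hnonneg _)) hk0.le
      have hS1 : wSum (fun a R => if a ∈ ALG (part g i) then 0
          else β * f (ALG (part g i)) / k) l ≤ β * f (ALG (part g i)) := by
        have hble : ∀ (a : α) (_R : Finset α), (if a ∈ ALG (part g i) then 0
            else β * f (ALG (part g i)) / k) ≤ β * f (ALG (part g i)) / k := by
          intro a _R; by_cases h : a ∈ ALG (part g i) <;> simp [h, hnn]
        have h1 := wSum_le_const hble l
        have hlen' : (l.length:ℝ) ≤ (k:ℝ) := by
          rw [hllen]; exact_mod_cast hOPTcard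
        calc wSum (fun a R => if a ∈ ALG (part g i) then 0
              else β * f (ALG (part g i)) / k) l
            ≤ l.length * (β * f (ALG (part g i)) / k) := h1
          _ ≤ k * (β * f (ALG (part g i)) / k) :=
              mul_le_mul_of_nonneg_right hlen' hnn
          _ = β * f (ALG (part g i)) := by field_simp
      linarith
    have hsum3 : (∑ i : Fin m, wSum (fun a R =>
          if a ∈ ALG (part g i) then (f (insert a R) - f R) else 0) l)
        = wSum (fun a R => if a ∈ Finset.univ.biUnion (fun i => ALG (part g i))
            then (f (insert a R) - f R) else 0) l := by
      rw [wSum_sum]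
      apply wSum_congr
      intro a R
      by_cases hc : a ∈ Finset.univ.biUnion (fun i => ALG (part g i))
      · have hga : a ∈ ALG (part g (g a)) := (hCiff g a).1 hc
        rw [Finset.sum_eq_single (g a)]
        · simp [hga, hc]
        · intro i _ hne
          have hnm : a ∉ ALG (part g i) := by
            intro hmem
            exact hne ((mem_part.1 (hALGsub _ hmem)) ▸ rfl)
          simp [hnm]
        · intro h; exact absurd (Finset.mem_univ _) h
      · rw [if_neg hc, Finset.sum_eq_zero]
        intro i _
        have hnm : a ∉ ALG (part g i) := by
          intro hmem
          exact hc (Finset.mem_biUnion.2 ⟨i, Finset.mem_univ _, hmem⟩)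
        simp [hnm]
    have hsuper : (∑ i : Fin m, (f OPT - f (OPT ∪ ALG (part g i)))) ≤ f OPT := by
      have hdisj : ∀ i j : Fin m, i ≠ j →
          Disjoint (ALG (part g i)) (ALG (part g j)) := by
        intro i j hij
        exact Finset.disjoint_of_subset_left (hALGsub _)
          (Finset.disjoint_of_subset_right (hALGsub _) (part_disjoint g hij))
      have h1 := superadd f hsub OPT (fun i => ALG (part g i)) hdisj Finset.univ
      have h2 : 0 ≤ f (OPT ∪ Finset.univ.biUnion fun i => ALG (part g i)) := hnonneg _
      rw [Finset.sum_sub_distrib, Finset.sum_const, Finset.card_univ, Fintype.card_fin,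
        nsmul_eq_mul]
      rw [Finset.card_univ, Fintype.card_fin] at h1
      linarith
    calc (∑ i : Fin m, wSum (fun a R => if a ∈ Finset.univ.biUnion
          (fun j => ALG (part (Function.update g a i) j))
        then 0 else (f (insert a R) - f R)) l)
        ≤ ∑ i : Fin m, (β * f (ALG (part g i))
          + (f OPT - (f (OPT ∪ ALG (part g i)) - f (ALG (part g i))))
          - wSum (fun a R => if a ∈ ALG (part g i)
              then (f (insert a R) - f R) else 0) l) :=
          Finset.sum_le_sum (fun i _ => hper i)
      _ = β * (∑ i : Fin m, f (ALG (part g i)))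
          + ((∑ i : Fin m, (f OPT - f (OPT ∪ ALG (part g i))))
            + (∑ i : Fin m, f (ALG (part g i))))
          - (∑ i : Fin m, wSum (fun a R => if a ∈ ALG (part g i)
              then (f (insert a R) - f R) else 0) l) := by
          simp only [Finset.sum_sub_distrib, Finset.sum_add_distrib, Finset.mul_sum,
            Finset.sum_const, Finset.card_univ, Fintype.card_fin, nsmul_eq_mul]
          ring
      _ ≤ (1 + β) * (∑ i : Fin m, f (ALG (part g i))) + f OPT
          - wSum (fun a R => if a ∈ Finset.univ.biUnion (fun i => ALG (part g i))
              then (f (insert a R) - f R) else 0) l := by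
          rw [hsum3]
          have : β * (∑ i : Fin m, f (ALG (part g i)))
              + (∑ i : Fin m, f (ALG (part g i)))
              = (1 + β) * (∑ i : Fin m, f (ALG (part g i))) := by ring
          linarith [hsuper]
  -- combine over g
  have hApartM : ∀ g : α → Fin m, (∑ i : Fin m, f (ALG (part g i)))
      ≤ (m:ℝ) * Finset.univ.sup' Finset.univ_nonempty fun j => f (ALG (part g j)) := by
    intro g
    have h1 := Finset.sum_le_card_nsmul Finset.univ (fun i => f (ALG (part g i)))
      (Finset.univ.sup' Finset.univ_nonempty fun j => f (ALG (part g j)))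
      (fun i _ => hMbound g i)
    rw [Finset.card_univ, Fintype.card_fin, nsmul_eq_mul] at h1
    exact h1
  have hbig : (m:ℝ) * Q ≤ (1 + β) * ((m:ℝ) * SM) + (N * f OPT - P) := by
    rw [← hmQ]
    calc (∑ g : α → Fin m, ∑ i : Fin m,
        wSum (fun a R => if a ∈ Finset.univ.biUnion
            (fun j => ALG (part (Function.update g a i) j))
          then 0 else (f (insert a R) - f R)) l)
        ≤ ∑ g : α → Fin m, ((1 + β) * (∑ i : Fin m, f (ALG (part g i))) + f OPT
          - wSum (fun a R => if a ∈ Finset.univ.biUnion (fun i => ALG (part g i))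
              then (f (insert a R) - f R) else 0) l) :=
          Finset.sum_le_sum (fun g _ => hDstep g)
      _ = (1 + β) * (∑ g : α → Fin m, ∑ i : Fin m, f (ALG (part g i)))
          + N * f OPT - P := by
          rw [Finset.sum_sub_distrib, Finset.sum_add_distrib, ← Finset.mul_sum,
            Finset.sum_const, Finset.card_univ, nsmul_eq_mul, hcard, hP_def]
      _ ≤ (1 + β) * ((m:ℝ) * SM) + (N * f OPT - P) := by
          have h1 : (∑ g : α → Fin m, ∑ i : Fin m, f (ALG (part g i)))
              ≤ (m:ℝ) * SM := by
            rw [hSM_def, Finset.mul_sum]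
            exact Finset.sum_le_sum (fun g _ => hApartM g)
          have h2 : (0:ℝ) ≤ 1 + β := by linarith
          nlinarith [h1, h2]
  have hQeq : Q = N * f OPT - P := by linarith [hPQ]
  have hkey : (1 - 1/(m:ℝ)) * (N * f OPT - P) ≤ (1 + β) * SM := by
    rw [← mul_le_mul_iff_of_pos_right hm0]
    have e1 : (1 - 1/(m:ℝ)) * (N * f OPT - P) * (m:ℝ)
        = ((m:ℝ) - 1) * (N * f OPT - P) := by
      have hmne : (m:ℝ) ≠ 0 := ne_of_gt hm0
      field_simp
    rw [e1]
    rw [hQeq] at hbig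
    nlinarith [hbig]
  have h0 : 0 ≤ 1 - 1/(m:ℝ) := by
    have hm1 : (1:ℝ) ≤ (m:ℝ) := by
      exact_mod_cast Nat.one_le_iff_ne_zero.2 (NeZero.ne m)
    have : 1/(m:ℝ) ≤ 1 := by rw [div_le_one hm0]; exact hm1
    linarith
  have h1 : 1 - 1/(m:ℝ) ≤ 1 := by
    have : 0 < 1/(m:ℝ) := by positivity
    linarith
  have hFK0 : 0 ≤ FK := by
    rw [hFK_def]
    exact Finset.sum_nonneg (fun g _ => hnonneg _)
  have hPc : (1 - 1/(m:ℝ)) * P ≤ FK := by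
    rcases le_or_gt 0 P with h | h
    · nlinarith
    · nlinarith
  calc (1 - 1 / (m : ℝ)) * ((m : ℝ) ^ Fintype.card α) * f OPT
      = (1 - 1/(m:ℝ)) * (N * f OPT - P) + (1 - 1/(m:ℝ)) * P := by rw [hN_def]; ring
    _ ≤ (1 + β) * SM + FK := add_le_add hkey hPc
    _ = FK + (1 + β) * SM := by ring

end Stmt8Aux

/-- overall distributed approximation factor for non-monotone (non-negative)
submodular maximization: if, for every realization of the random partition, a post-processing
step returns `S(g) ⊆ ⋃_i ALG(T_i(g))` of size at most `k` with
`f(S(g)) ≥ (1/e)·f(OPT ∩ ⋃_i ALG(T_i(g)))`, then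
`𝔼[max(f(S), max_i f(ALG(T_i)))] ≥ (((1−1/m)/e)/(1+(1+β)/e))·f(OPT)`. -/
theorem stmt_8 {α : Type*} [DecidableEq α] [Fintype α] {m : ℕ} [NeZero m]
    (f : Finset α → ℝ)
    (hsub : ∀ X Y : Finset α, X ⊆ Y → ∀ x, x ∉ Y →
      f (insert x Y) - f Y ≤ f (insert x X) - f X)
    (hnonneg : ∀ S : Finset α, 0 ≤ f S)
    (hempty : f ∅ = 0)
    (k : ℕ) (hk : 1 ≤ k) (β : ℝ) (hβ : 0 < β)
    (OPT : Finset α) (hOPTcard : OPT.card ≤ k)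
    (ALG : Finset α → Finset α)
    (hALGsub : ∀ T, ALG T ⊆ T)
    (hALGcard : ∀ T, (ALG T).card ≤ k)
    (hALGind : ∀ T : Finset α, ∀ x ∈ T \ ALG T, ALG (T.erase x) = ALG T)
    (hALGmarg : ∀ T : Finset α, ∀ x ∈ T \ ALG T,
      f (insert x (ALG T)) - f (ALG T) ≤ β * f (ALG T) / k)
    (S : (α → Fin m) → Finset α)
    (hSsub : ∀ g, S g ⊆ Finset.univ.biUnion fun i => ALG (part g i))
    (hScard : ∀ g, (S g).card ≤ k)
    (hSval : ∀ g, f (S g) ≥ (1 / Real.exp 1) *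
      f (OPT ∩ Finset.univ.biUnion fun i => ALG (part g i))) :
    (∑ g : α → Fin m,
        max (f (S g)) (Finset.univ.sup' Finset.univ_nonempty fun i => f (ALG (part g i)))) /
        (m : ℝ) ^ Fintype.card α
      ≥ (((1 - 1 / (m : ℝ)) / Real.exp 1) / (1 + (1 + β) / Real.exp 1)) * f OPT := by
  have he : (0:ℝ) < Real.exp 1 := Real.exp_pos 1
  have hm0 : (0:ℝ) < (m:ℝ) := by exact_mod_cast Nat.pos_of_ne_zero (NeZero.ne m)
  have hN0 : (0:ℝ) < (m:ℝ) ^ Fintype.card α := pow_pos hm0 _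
  have hcore := Stmt8Aux.core (m := m) f hsub hnonneg hempty k hk β hβ OPT hOPTcard ALG
    hALGsub hALGind hALGmarg
  set Smax : ℝ := ∑ g : α → Fin m,
    max (f (S g)) (Finset.univ.sup' Finset.univ_nonempty fun i => f (ALG (part g i)))
    with hSd
  have hFKle : (∑ g : α → Fin m, f (OPT ∩ Finset.univ.biUnion fun i => ALG (part g i)))
      ≤ Real.exp 1 * Smax := by
    rw [hSd, Finset.mul_sum]
    apply Finset.sum_le_sum
    intro g _
    have h2 : Real.exp 1 * ((1 / Real.exp 1) *
        f (OPT ∩ Finset.univ.biUnion fun i => ALG (part g i)))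
        ≤ Real.exp 1 * f (S g) :=
      mul_le_mul_of_nonneg_left (hSval g) he.le
    have h3 : Real.exp 1 * ((1 / Real.exp 1) *
        f (OPT ∩ Finset.univ.biUnion fun i => ALG (part g i)))
        = f (OPT ∩ Finset.univ.biUnion fun i => ALG (part g i)) := by
      field_simp
    have h4 : Real.exp 1 * f (S g) ≤ Real.exp 1 *
        max (f (S g)) (Finset.univ.sup' Finset.univ_nonempty fun i => f (ALG (part g i))) :=
      mul_le_mul_of_nonneg_left (le_max_left _ _) he.le
    linarith
  have hSMle : (∑ g : α → Fin m,
      Finset.univ.sup' Finset.univ_nonempty fun i => f (ALG (part g i))) ≤ Smax := by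
    rw [hSd]
    exact Finset.sum_le_sum (fun g _ => le_max_right _ _)
  have hb : (0:ℝ) ≤ 1 + β := by linarith
  have h5 := mul_le_mul_of_nonneg_left hSMle hb
  have hmain : (1 - 1/(m:ℝ)) * ((m:ℝ) ^ Fintype.card α) * f OPT
      ≤ (Real.exp 1 + 1 + β) * Smax := by linarith
  rw [ge_iff_le]
  have hconst : ((1 - 1/(m:ℝ)) / Real.exp 1) / (1 + (1 + β) / Real.exp 1)
      = (1 - 1/(m:ℝ)) / (Real.exp 1 + 1 + β) := by
    rw [div_div]
    congr 1
    field_simp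
    ring
  rw [hconst, div_mul_eq_mul_div, div_le_div_iff₀ (by positivity) hN0]
  nlinarith [hmain]
end

section
/- Let f be a monotone submodular set function on a finite ground set with f(∅) = 0. Let O₁ ⊆ OPT' be finite sets, let π be a linear order on OPT' in which every element of O₁ precedes every element of OPT' \ O₁, let y_1, …, y_M be distinct elements, let S^j := {y_1, …, y_j} (with S^0 = ∅), and let J ⊆ {1, …, M}. Then f( O₁ ∪ {y_j : j ∈ J} ) ≥ Σ_{x ∈ O₁} Δ(x, π^x) + Σ_{j ∈ J} Δ( y_j, OPT' ∪ S^{j−1} ), where π^x denotes the set of elements of OPT' preceding x in π. -/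
open Finset

private lemma telescopeA {α : Type*} [DecidableEq α]
    (f : Finset α → ℝ) (rank : α → ℕ) (S : Finset α)
    (hinj : ∀ x ∈ S, ∀ z ∈ S, rank x = rank z → x = z) :
    ∑ x ∈ S, (f (insert x (S.filter fun z => rank z < rank x)) -
        f (S.filter fun z => rank z < rank x)) = f S - f ∅ := by
  induction S using Finset.strongInduction with
  | _ S ih =>
    rcases S.eq_empty_or_nonempty with rfl | hne
    · simp
    · obtain ⟨m, hm, hmax⟩ := S.exists_max_image rank hne
      have hins : S = insert m (S.erase m) := (Finset.insert_erase hm).symm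
      have hfm : S.filter (fun z => rank z < rank m) = S.erase m := by
        ext z
        simp only [Finset.mem_filter, Finset.mem_erase]
        constructor
        · rintro ⟨hz, hlt⟩
          refine ⟨?_, hz⟩
          intro h; subst h; exact absurd hlt (lt_irrefl _)
        · rintro ⟨hne', hz⟩
          exact ⟨hz, lt_of_le_of_ne (hmax z hz) fun h => hne' (hinj z hz m hm h)⟩
      have hfx : ∀ x ∈ S.erase m, S.filter (fun z => rank z < rank x)
          = (S.erase m).filter (fun z => rank z < rank x) := by
        intro x hx
        ext z
        simp only [Finset.mem_filter, Finset.mem_erase]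
        constructor
        · rintro ⟨hz, hlt⟩
          refine ⟨⟨?_, hz⟩, hlt⟩
          intro h; subst h
          exact absurd (lt_of_lt_of_le hlt (hmax x (Finset.mem_of_mem_erase hx))) (lt_irrefl _)
        · rintro ⟨⟨hne', hz⟩, hlt⟩; exact ⟨hz, hlt⟩
      rw [hins, Finset.sum_insert (Finset.notMem_erase _ _)]
      have hrec := ih (S.erase m) (Finset.erase_ssubset hm)
        (fun a ha b hb h => hinj a (Finset.mem_of_mem_erase ha) b (Finset.mem_of_mem_erase hb) h)
      have hcongr : ∑ x ∈ S.erase m, (f (insert x ((insert m (S.erase m)).filter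
            fun z => rank z < rank x)) -
            f ((insert m (S.erase m)).filter fun z => rank z < rank x))
          = ∑ x ∈ S.erase m, (f (insert x ((S.erase m).filter fun z => rank z < rank x)) -
            f ((S.erase m).filter fun z => rank z < rank x)) := by
        refine Finset.sum_congr rfl fun x hx => ?_
        rw [← hins, hfx x hx]
      rw [hcongr, hrec, ← hins, hfm, Finset.insert_erase hm]
      ring

/-- for monotone submodular `f` with `f(∅)=0`, sets `O₁ ⊆ OPT'` where the
linear order `π` on `OPT'` (encoded by an injective rank function) puts all of `O₁` before
`OPT' \ O₁`, distinct elements `y_1,…,y_M` with prefixes `S^j = {y_1,…,y_j}`, and any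
`J ⊆ {1,…,M}`:
`f(O₁ ∪ {y_j : j ∈ J}) ≥ Σ_{x ∈ O₁} Δ(x, π^x) + Σ_{j ∈ J} Δ(y_j, OPT' ∪ S^{j−1})`. -/
theorem stmt_11 {α : Type*} [DecidableEq α] [Fintype α]
    (f : Finset α → ℝ)
    (hsub : ∀ X Y : Finset α, X ⊆ Y → ∀ x, x ∉ Y →
      f (insert x Y) - f Y ≤ f (insert x X) - f X)
    (hmono : ∀ X Y : Finset α, X ⊆ Y → f X ≤ f Y)
    (hempty : f ∅ = 0)
    (O₁ OPT' : Finset α) (hO : O₁ ⊆ OPT')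
    (rank : α → ℕ)
    (hrank : ∀ x ∈ OPT', ∀ y ∈ OPT', rank x = rank y → x = y)
    (horder : ∀ x ∈ O₁, ∀ y ∈ OPT' \ O₁, rank x < rank y)
    (M : ℕ) (y : Fin M → α) (hy : Function.Injective y)
    (J : Finset (Fin M)) :
    f (O₁ ∪ J.image y) ≥
      (∑ x ∈ O₁,
          (f (insert x (OPT'.filter fun z => rank z < rank x)) -
            f (OPT'.filter fun z => rank z < rank x))) +
      ∑ j ∈ J,
        (f (insert (y j) (OPT' ∪ (Finset.univ.filter fun i : Fin M => i < j).image y)) -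
          f (OPT' ∪ (Finset.univ.filter fun i : Fin M => i < j).image y)) := by
  -- First sum: filters over OPT' coincide with filters over O₁, then telescope to f O₁.
  have hfilt : ∀ x ∈ O₁, OPT'.filter (fun z => rank z < rank x)
      = O₁.filter (fun z => rank z < rank x) := by
    intro x hx
    ext z
    simp only [Finset.mem_filter]
    constructor
    · rintro ⟨hz, hlt⟩
      refine ⟨?_, hlt⟩
      by_contra hzn
      exact absurd (lt_trans (horder x hx z (Finset.mem_sdiff.mpr ⟨hz, hzn⟩)) hlt) (lt_irrefl _)
    · rintro ⟨hz, hlt⟩; exact ⟨hO hz, hlt⟩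
  have hsum1 : (∑ x ∈ O₁,
      (f (insert x (OPT'.filter fun z => rank z < rank x)) -
        f (OPT'.filter fun z => rank z < rank x))) = f O₁ := by
    have ht := telescopeA f rank O₁ (fun a ha b hb h => hrank a (hO ha) b (hO hb) h)
    calc (∑ x ∈ O₁,
        (f (insert x (OPT'.filter fun z => rank z < rank x)) -
          f (OPT'.filter fun z => rank z < rank x)))
        = ∑ x ∈ O₁, (f (insert x (O₁.filter fun z => rank z < rank x)) -
          f (O₁.filter fun z => rank z < rank x)) :=
          Finset.sum_congr rfl fun x hx => by rw [hfilt x hx]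
      _ = f O₁ - f ∅ := ht
      _ = f O₁ := by rw [hempty, sub_zero]
  -- Second sum: bound by f (O₁ ∪ J.image y) - f O₁, by induction on max element of J.
  have hsum2 : ∀ J : Finset (Fin M),
      (∑ j ∈ J,
        (f (insert (y j) (OPT' ∪ (Finset.univ.filter fun i : Fin M => i < j).image y)) -
          f (OPT' ∪ (Finset.univ.filter fun i : Fin M => i < j).image y)))
        ≤ f (O₁ ∪ J.image y) - f O₁ := by
    intro J
    induction J using Finset.induction_on_max with
    | empty => simp
    | insert a s hlt ih =>
      rw [Finset.sum_insert (by intro h; exact absurd (hlt a h) (lt_irrefl _))]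
      set X := O₁ ∪ s.image y with hX
      set Y := OPT' ∪ (Finset.univ.filter fun i : Fin M => i < a).image y with hY
      have hXY : X ⊆ Y := by
        apply Finset.union_subset_union hO
        apply Finset.image_subset_image
        intro i hi
        simp only [Finset.mem_filter, Finset.mem_univ, true_and]
        exact hlt i hi
      have himg : O₁ ∪ (insert a s).image y = insert (y a) X := by
        rw [Finset.image_insert, Finset.union_insert]
      have hkey : f (insert (y a) Y) - f Y ≤ f (insert (y a) X) - f X := by
        by_cases hmem : y a ∈ Y
        · rw [Finset.insert_eq_self.mpr hmem, sub_self]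
          have := hmono X (insert (y a) X) (Finset.subset_insert _ _)
          linarith
        · exact hsub X Y hXY (y a) hmem
      have := ih
      rw [himg]
      linarith
  have h2 := hsum2 J
  rw [ge_iff_le, hsum1]
  linarith
end

section
/- There is an absolute constant c₀ > 0 with the following property. Let k ≥ 1 and 1 ≤ k₂ ≤ k be integers and set M := ⌈(2√2 + 1)·k⌉. Suppose reals β, α and reals a_j, b_j, c_j for 1 ≤ j ≤ M satisfy: (1) β ≥ 1 − α + Σ_{j ∈ J} (a_j + c_j) for every J ⊆ {1,…,M} with |J| = k₂; (2) a_j + b_j + c_j ≥ (α − Σ_{j'=1}^{j−1} a_{j'})/k₂ for all 1 ≤ j ≤ M; (3) Σ_{j=1}^{M} b_j ≤ 1 − α; (4) 0 ≤ α ≤ 1 and 0 ≤ a_j, b_j, c_j ≤ 1 for all j; (5) β ≥ Σ_{j=1}^{k} (a_j + b_j + c_j); (6) a_j + b_j + c_j ≥ a_{j+1} + b_{j+1} + c_{j+1} for all 1 ≤ j < M. Then β ≥ 2 − √2 − c₀/k. -/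
open Finset

/-- `M = ⌈(2√2 + 1)·k⌉`, the number of items selected by greedy in the core-set. -/
noncomputable def lpM (k : ℕ) : ℕ := ⌈(2 * Real.sqrt 2 + 1) * (k : ℝ)⌉₊

/-- Feasibility for the factor-revealing linear program `LP^{k,k₂}`. -/
noncomputable def LPFeasible (k k₂ : ℕ) (β α : ℝ) (a b c : ℕ → ℝ) : Prop :=
  (∀ J ⊆ Finset.Icc 1 (lpM k), J.card = k₂ →
      β ≥ 1 - α + ∑ j ∈ J, (a j + c j)) ∧
  (∀ j ∈ Finset.Icc 1 (lpM k),
      a j + b j + c j ≥ (α - ∑ j' ∈ Finset.Icc 1 (j - 1), a j') / (k₂ : ℝ)) ∧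
  (∑ j ∈ Finset.Icc 1 (lpM k), b j ≤ 1 - α) ∧
  (0 ≤ α ∧ α ≤ 1) ∧
  (∀ j ∈ Finset.Icc 1 (lpM k),
      0 ≤ a j ∧ a j ≤ 1 ∧ 0 ≤ b j ∧ b j ≤ 1 ∧ 0 ≤ c j ∧ c j ≤ 1) ∧
  (β ≥ ∑ j ∈ Finset.Icc 1 k, (a j + b j + c j)) ∧
  (∀ j, 1 ≤ j → j < lpM k →
      a j + b j + c j ≥ a (j + 1) + b (j + 1) + c (j + 1))

/-- Summation by parts: for a nonincreasing nonnegative `g` and weights `w` whose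
partial sums are dominated by `C * min m K`, the weighted sum is at most `C` times
the sum of the first `K` values. -/
lemma abel_aux (N K : ℕ) (C : ℝ) (w g : ℕ → ℝ) (hK : 1 ≤ K) (hKN : K ≤ N)
    (hg0 : ∀ i, 0 ≤ g i) (hganti : ∀ i j, i ≤ j → g j ≤ g i)
    (hVm : ∀ m, m ≤ N → m ≤ K → (∑ i ∈ range m, w i) ≤ C * m)
    (hVK : ∀ m, K ≤ m → m ≤ N → (∑ i ∈ range m, w i) ≤ C * K) :
    ∑ i ∈ range N, w i * g i ≤ C * ∑ i ∈ range K, g i := by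
  have hN1 : 1 ≤ N := le_trans hK hKN
  have H : ∀ m, m < N →
      ∑ i ∈ range (m+1), w i * g i
        + (C * (min (m+1) K : ℕ) - ∑ i ∈ range (m+1), w i) * g m
      ≤ C * ∑ i ∈ range (min (m+1) K), g i := by
    intro m
    induction m with
    | zero =>
      intro _
      have hmin : min 1 K = 1 := min_eq_left hK
      rw [hmin]
      simp [Finset.sum_range_one]
      ring_nf
      exact le_refl _
    | succ m ih =>
      intro hm1N
      have hmN : m < N := Nat.lt_of_succ_lt hm1N
      have Pm := ih hmN
      rcases Nat.lt_or_ge (m+1) K with hcase | hcase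
      · have h1 : min (m+1) K = m+1 := min_eq_left (le_of_lt hcase)
        have h2 : min (m+2) K = m+2 := min_eq_left hcase
        rw [h1] at Pm
        rw [h2]
        have hgm : g (m+1) ≤ g m := hganti m (m+1) (Nat.le_succ m)
        have hV : (∑ i ∈ range (m+1), w i) ≤ C * ((m:ℝ)+1) := by
          have := hVm (m+1) (le_of_lt hm1N) (le_of_lt hcase)
          push_cast at this
          linarith
        have hprod : 0 ≤ (C * ((m:ℝ)+1) - ∑ i ∈ range (m+1), w i) * (g m - g (m+1)) :=
          mul_nonneg (by linarith) (by linarith)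
        rw [Finset.sum_range_succ (fun i => w i * g i) (m+1),
            Finset.sum_range_succ w (m+1), Finset.sum_range_succ g (m+1)]
        push_cast
        push_cast at Pm
        nlinarith [Pm, hprod]
      · have h1 : min (m+1) K = K := min_eq_right hcase
        have h2 : min (m+2) K = K := min_eq_right (le_trans hcase (Nat.le_succ _))
        rw [h1] at Pm
        rw [h2]
        have hgm : g (m+1) ≤ g m := hganti m (m+1) (Nat.le_succ m)
        have hV : (∑ i ∈ range (m+1), w i) ≤ C * K :=
          hVK (m+1) hcase (le_of_lt hm1N)
        have hprod : 0 ≤ (C * K - ∑ i ∈ range (m+1), w i) * (g m - g (m+1)) :=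
          mul_nonneg (by linarith) (by linarith)
        rw [Finset.sum_range_succ (fun i => w i * g i) (m+1),
            Finset.sum_range_succ w (m+1)]
        nlinarith [Pm, hprod]
  obtain ⟨N', rfl⟩ : ∃ N', N = N' + 1 := ⟨N - 1, (Nat.succ_pred_eq_of_pos hN1).symm⟩
  have hfin := H N' (Nat.lt_succ_self N')
  have hminN : min (N'+1) K = K := min_eq_right hKN
  rw [hminN] at hfin
  have hVN : (∑ i ∈ range (N'+1), w i) ≤ C * K := hVK (N'+1) hKN (le_refl _)
  nlinarith [mul_nonneg (sub_nonneg.mpr hVN) (hg0 N'), hfin]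

/-- Rearrangement plus summation by parts: a weighted sum of nonnegative values with
nonincreasing weights is at most `C` times the maximal `K`-subset sum `γ`. -/
lemma sorted_bound (M N K : ℕ) (C γ : ℝ) (ψ : ℕ → ℝ) (hK : 1 ≤ K) (hKN : K ≤ N)
    (hNM : N ≤ M) (hC0 : 0 ≤ C)
    (hψ0 : ∀ j, 1 ≤ j → j ≤ M → 0 ≤ ψ j)
    (hwin : ∀ J ⊆ Icc 1 M, J.card = K → ∑ j ∈ J, ψ j ≤ γ)
    (w : ℕ → ℝ)
    (hwanti : ∀ i j, i ≤ j → j < N → w j ≤ w i)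
    (hVm : ∀ m, m ≤ N → m ≤ K → (∑ i ∈ range m, w i) ≤ C * m)
    (hVK : ∀ m, K ≤ m → m ≤ N → (∑ i ∈ range m, w i) ≤ C * K) :
    ∑ i ∈ range N, w i * ψ (1 + i) ≤ C * γ := by
  classical
  set F : Fin N → ℝ := fun i => -ψ (1 + i.1) with hF
  set σ : Equiv.Perm (Fin N) := Tuple.sort F with hσ
  set g : ℕ → ℝ := fun m => if h : m < N then ψ (1 + (σ ⟨m, h⟩).1) else 0 with hg
  have hgval : ∀ (m : ℕ) (h : m < N), g m = ψ (1 + (σ ⟨m, h⟩).1) := by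
    intro m h; simp only [hg, dif_pos h]
  have hg0 : ∀ m, 0 ≤ g m := by
    intro m
    by_cases h : m < N
    · rw [hgval m h]
      exact hψ0 _ (Nat.le_add_right _ _) (by have := (σ ⟨m, h⟩).2; omega)
    · simp only [hg, dif_neg h]; exact le_refl 0
  have hganti : ∀ i j, i ≤ j → g j ≤ g i := by
    intro i j hij
    by_cases hj : j < N
    · have hi : i < N := lt_of_le_of_lt hij hj
      rw [hgval i hi, hgval j hj]
      have := Tuple.monotone_sort F (a := ⟨i, hi⟩) (b := ⟨j, hj⟩) hij
      simp only [Function.comp, hF] at this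
      linarith
    · rw [(by simp only [hg, dif_neg hj] : g j = 0)]
      exact hg0 i
  have hre : ∑ i ∈ range N, w i * ψ (1 + i) ≤ ∑ i ∈ range N, w i * g i := by
    have hmono : Monovary (fun i : Fin N => w i.1) (fun i : Fin N => g i.1) := by
      intro i j hlt
      rcases le_total j i with h | h
      · exact hwanti j.1 i.1 h i.2
      · exact absurd (hganti i.1 j.1 h) (not_le.mpr hlt)
    have hperm := hmono.sum_mul_comp_perm_le_sum_mul (σ := σ.symm)
    have hL : ∑ i : Fin N, w i.1 * g ((σ.symm i).1) = ∑ i ∈ range N, w i * ψ (1 + i) := by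
      rw [← Fin.sum_univ_eq_sum_range (fun m => w m * ψ (1 + m)) N]
      apply Finset.sum_congr rfl
      intro i _
      congr 1
      have h2 : (σ.symm i).1 < N := (σ.symm i).2
      rw [hgval _ h2]
      congr 2
      have h3 : (⟨(σ.symm i).1, h2⟩ : Fin N) = σ.symm i := rfl
      rw [h3, Equiv.apply_symm_apply]
    have hR : ∑ i : Fin N, w i.1 * g i.1 = ∑ i ∈ range N, w i * g i :=
      Fin.sum_univ_eq_sum_range (fun m => w m * g m) N
    rw [← hL, ← hR]
    exact hperm
  have habel := abel_aux N K C w g hK hKN hg0 hganti hVm hVK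
  set e : ℕ → ℕ := fun m => if h : m < N then 1 + (σ ⟨m, h⟩).1 else 0 with he
  have heval : ∀ (m : ℕ) (h : m < N), e m = 1 + (σ ⟨m, h⟩).1 := by
    intro m h; simp only [he, dif_pos h]
  have hinj : Set.InjOn e (range K) := by
    intro m1 hm1 m2 hm2 heq
    simp only [Finset.coe_range, Set.mem_Iio] at hm1 hm2
    have h1 : m1 < N := lt_of_lt_of_le hm1 hKN
    have h2 : m2 < N := lt_of_lt_of_le hm2 hKN
    rw [heval m1 h1, heval m2 h2] at heq
    have h4 : σ ⟨m1, h1⟩ = σ ⟨m2, h2⟩ := Fin.val_injective (by omega)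
    have h5 := σ.injective h4
    exact congrArg Fin.val h5
  set J : Finset ℕ := (range K).image e with hJ
  have hJcard : J.card = K := by
    rw [hJ, Finset.card_image_of_injOn hinj, Finset.card_range]
  have hJsub : J ⊆ Icc 1 M := by
    intro j hj
    rw [hJ, Finset.mem_image] at hj
    obtain ⟨m, hm, rfl⟩ := hj
    rw [Finset.mem_range] at hm
    have h1 : m < N := lt_of_lt_of_le hm hKN
    rw [heval m h1]
    rw [Finset.mem_Icc]
    have := (σ ⟨m, h1⟩).2
    omega
  have htop : ∑ i ∈ range K, g i ≤ γ := by
    have hsum : ∑ j ∈ J, ψ j = ∑ i ∈ range K, g i := by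
      rw [hJ, Finset.sum_image hinj]
      apply Finset.sum_congr rfl
      intro m hm
      rw [Finset.mem_range] at hm
      have h1 : m < N := lt_of_lt_of_le hm hKN
      rw [heval m h1, hgval m h1]
    rw [← hsum]
    exact hwin J hJsub hJcard
  calc ∑ i ∈ range N, w i * ψ (1 + i) ≤ ∑ i ∈ range N, w i * g i := hre
    _ ≤ C * ∑ i ∈ range K, g i := habel
    _ ≤ C * γ := mul_le_mul_of_nonneg_left htop hC0

lemma prefix_identity (ψ : ℕ → ℝ) (N : ℕ) :
    ∑ j ∈ Icc 1 N, (∑ i ∈ Icc 1 (j-1), ψ i) = ∑ j ∈ Icc 1 N, ((N:ℝ) - j) * ψ j := by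
  induction N with
  | zero => simp
  | succ N ih =>
    rw [Finset.sum_Icc_succ_top (by omega : 1 ≤ N + 1),
        Finset.sum_Icc_succ_top (by omega : 1 ≤ N + 1)]
    have hst : ∑ j ∈ Icc 1 N, ((N:ℝ) + 1 - j) * ψ j
        = ∑ j ∈ Icc 1 N, ((N:ℝ) - j) * ψ j + ∑ j ∈ Icc 1 N, ψ j := by
      rw [← Finset.sum_add_distrib]
      apply Finset.sum_congr rfl
      intro j _
      ring
    push_cast
    rw [hst, ← ih]
    simp

lemma gauss_sum (N : ℕ) : ∑ i ∈ range N, ((N:ℝ) - (1 + i)) = N * ((N:ℝ) - 1) / 2 := by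
  induction N with
  | zero => simp
  | succ N ih =>
    rw [Finset.sum_range_succ]
    have h : ∑ i ∈ range N, ((N:ℝ) + 1 - (1 + i))
        = ∑ i ∈ range N, ((N:ℝ) - (1 + i)) + ∑ i ∈ range N, (1:ℝ) := by
      rw [← Finset.sum_add_distrib]
      apply Finset.sum_congr rfl
      intro j _; ring
    push_cast
    rw [h, ih]
    simp
    ring

lemma icc_to_range (f : ℕ → ℝ) (n : ℕ) :
    ∑ j ∈ Icc 1 n, f j = ∑ i ∈ range n, f (1 + i) := by
  rw [← Finset.Ico_add_one_right_eq_Icc, Finset.sum_Ico_eq_sum_range]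
  simp

/-- The main per-window-length inequality derived from the LP constraints. -/
lemma lp_key (M N K : ℕ) (α γ C : ℝ) (aa bb cc : ℕ → ℝ)
    (hK : 1 ≤ K) (hKN : K ≤ N) (hNM : N ≤ M)
    (h2 : ∀ j ∈ Icc 1 M, aa j + bb j + cc j ≥ (α - ∑ j' ∈ Icc 1 (j - 1), aa j') / (K : ℝ))
    (h3 : ∑ j ∈ Icc 1 M, bb j ≤ 1 - α)
    (h5 : ∀ j ∈ Icc 1 M, 0 ≤ aa j ∧ 0 ≤ bb j ∧ 0 ≤ cc j)
    (hwin : ∀ J ⊆ Icc 1 M, J.card = K → ∑ j ∈ J, (aa j + cc j) ≤ γ)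
    (hC1 : ((N:ℝ) - 1)/K + 1 ≤ C)
    (hC2 : (N:ℝ) + (N:ℝ)*((N:ℝ)-1)/2/K ≤ C*K) :
    (N:ℝ)/K * α - C*γ ≤ 1 - α := by
  have hKpos : (0:ℝ) < K := by exact_mod_cast hK
  have hN1 : 1 ≤ N := le_trans hK hKN
  set ψ : ℕ → ℝ := fun j => aa j + cc j with hψ
  have hbsub : ∑ j ∈ Icc 1 N, bb j ≤ 1 - α := by
    refine le_trans (Finset.sum_le_sum_of_subset_of_nonneg
      (Finset.Icc_subset_Icc_right hNM) ?_) h3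
    intro j hj _
    exact (h5 j hj).2.1
  have hpoint : ∀ j ∈ Icc 1 N,
      (α - ∑ j' ∈ Icc 1 (j-1), ψ j') / (K:ℝ) - ψ j ≤ bb j := by
    intro j hj
    have hjM : j ∈ Icc 1 M := Finset.Icc_subset_Icc_right hNM hj
    have hjle : j ≤ N := (Finset.mem_Icc.mp hj).2
    have hsub : Icc 1 (j-1) ⊆ Icc 1 M := Finset.Icc_subset_Icc_right (by omega)
    have hAle : ∑ j' ∈ Icc 1 (j-1), aa j' ≤ ∑ j' ∈ Icc 1 (j-1), ψ j' := by
      apply Finset.sum_le_sum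
      intro i hi
      have := (h5 i (hsub hi)).2.2
      simp only [hψ]
      linarith
    have hdiv : (α - ∑ j' ∈ Icc 1 (j-1), ψ j') / (K:ℝ)
        ≤ (α - ∑ j' ∈ Icc 1 (j-1), aa j') / (K:ℝ) := by
      gcongr
    have h2j := h2 j hjM
    simp only [hψ]
    linarith
  have hsum1 : ∑ j ∈ Icc 1 N, ((α - ∑ j' ∈ Icc 1 (j-1), ψ j') / (K:ℝ) - ψ j) ≤ 1 - α :=
    le_trans (Finset.sum_le_sum hpoint) hbsub
  have e3 : ∑ j ∈ Icc 1 N, (((N:ℝ) - j)/K + 1) * ψ j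
      = (∑ j ∈ Icc 1 N, ((N:ℝ) - j) * ψ j)/K + ∑ j ∈ Icc 1 N, ψ j := by
    rw [Finset.sum_div, ← Finset.sum_add_distrib]
    apply Finset.sum_congr rfl
    intro j _
    ring
  have E : ∑ j ∈ Icc 1 N, ((α - ∑ j' ∈ Icc 1 (j-1), ψ j') / (K:ℝ) - ψ j)
      = (N:ℝ)/K*α - ∑ j ∈ Icc 1 N, (((N:ℝ) - j)/K + 1) * ψ j := by
    rw [Finset.sum_sub_distrib, ← Finset.sum_div, Finset.sum_sub_distrib,
        prefix_identity, Finset.sum_const, Nat.card_Icc, e3]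
    push_cast
    field_simp
    ring
  rw [E] at hsum1
  set w : ℕ → ℝ := fun i => ((N:ℝ) - (1+i))/K + 1 with hw
  have hrange : ∑ j ∈ Icc 1 N, (((N:ℝ) - j)/K + 1) * ψ j
      = ∑ i ∈ range N, w i * ψ (1+i) := by
    rw [icc_to_range (fun j => (((N:ℝ) - j)/K + 1) * ψ j) N]
    apply Finset.sum_congr rfl
    intro i _
    simp only [hw]
    push_cast
    ring
  have hC0 : 0 ≤ C := by
    have h1 : (0:ℝ) ≤ ((N:ℝ) - 1)/K := by
      apply div_nonneg _ (le_of_lt hKpos)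
      have : (1:ℝ) ≤ N := by exact_mod_cast hN1
      linarith
    linarith
  have hψ0 : ∀ j, 1 ≤ j → j ≤ M → 0 ≤ ψ j := by
    intro j h1 h2'
    have := h5 j (Finset.mem_Icc.mpr ⟨h1, h2'⟩)
    simp only [hψ]
    linarith [this.1, this.2.2]
  have hwanti : ∀ i j, i ≤ j → j < N → w j ≤ w i := by
    intro i j hij _
    have hcast : (i:ℝ) ≤ j := by exact_mod_cast hij
    simp only [hw]
    have h1 : ((N:ℝ) - (1+(j:ℝ))) ≤ ((N:ℝ) - (1+(i:ℝ))) := by linarith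
    have h2' := (div_le_div_iff_of_pos_right hKpos).mpr h1
    linarith
  have hVm : ∀ m, m ≤ N → m ≤ K → (∑ i ∈ range m, w i) ≤ C * m := by
    intro m hmN hmK
    have hterm : ∀ i ∈ range m, w i ≤ C := by
      intro i hi
      rw [Finset.mem_range] at hi
      have h0 : w i ≤ w 0 := hwanti 0 i (Nat.zero_le i) (lt_of_lt_of_le hi hmN)
      have hw0 : w 0 = ((N:ℝ)-1)/K + 1 := by simp [hw]
      exact h0.trans (hw0.le.trans (le_of_eq rfl) |>.trans hC1)
    calc ∑ i ∈ range m, w i ≤ ∑ i ∈ range m, C := Finset.sum_le_sum hterm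
      _ = m * C := by rw [Finset.sum_const, Finset.card_range, nsmul_eq_mul]
      _ = C * m := mul_comm _ _
  have hVK : ∀ m, K ≤ m → m ≤ N → (∑ i ∈ range m, w i) ≤ C * K := by
    intro m hKm hmN
    have hmono : ∑ i ∈ range m, w i ≤ ∑ i ∈ range N, w i := by
      apply Finset.sum_le_sum_of_subset_of_nonneg (Finset.range_subset_range.mpr hmN)
      intro i hi _
      rw [Finset.mem_range] at hi
      simp only [hw]
      have h1 : (1:ℝ) + i ≤ N := by
        have : 1 + i ≤ N := by omega
        exact_mod_cast this
      have h2' : (0:ℝ) ≤ ((N:ℝ) - (1+i))/K := div_nonneg (by linarith) hKpos.le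
      linarith
    have hVN : ∑ i ∈ range N, w i = (N:ℝ) + (N:ℝ)*((N:ℝ)-1)/2/K := by
      simp only [hw]
      rw [Finset.sum_add_distrib, ← Finset.sum_div, gauss_sum, Finset.sum_const,
          Finset.card_range, nsmul_eq_mul]
      ring
    linarith [hC2]
  have hsb := sorted_bound M N K C γ ψ hK hKN hNM hC0 hψ0 hwin w hwanti hVm hVK
  rw [hrange] at hsum1
  linarith

lemma final_branch1 (s κ γ α : ℝ) (hκ : 1 ≤ κ) (hα1 : α ≤ 3/5)
    (hγ0 : 0 ≤ γ) (hslb : 1.414 ≤ s)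
    (hkey : 3*α - (15/2 - 3/(2*κ))*γ ≤ 1 - α) : α + 1 - s ≤ γ := by
  have hκ0 : (0:ℝ) < κ := by linarith
  have hkey' : (8*α - 2)*κ ≤ γ*(15*κ-3) := by
    have e : γ*(15*κ-3) - (8*α-2)*κ = 2*κ*((1-α) - (3*α - (15/2 - 3/(2*κ))*γ)) := by
      field_simp
      ring
    nlinarith [mul_nonneg hκ0.le (sub_nonneg.mpr hkey)]
  have hprod : 0 ≤ (κ - 1)*(15*s - 17 - 7*α) :=
    mul_nonneg (by linarith) (by linarith)
  have h15 : (0:ℝ) < 15*κ - 3 := by linarith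
  nlinarith [hkey', hprod, h15]

lemma final_branch2 (s κ t γ α : ℝ) (hs2 : s^2 = 2) (hs0 : 0 ≤ s) (hκ : 1 ≤ κ)
    (ht1 : s*κ ≤ t) (ht2 : t ≤ s*κ + 1) (hα1 : 3/5 ≤ α) (hα2 : α ≤ 1)
    (hslb : 1.414 ≤ s) (hsub : s ≤ 1.415)
    (hkey : t/κ*α - (t/κ + t*(t-1)/(2*κ*κ))*γ ≤ 1 - α) :
    α + 1 - s ≤ γ := by
  have hκ0 : (0:ℝ) < κ := by linarith
  have hε0 : 0 ≤ t - s*κ := by linarith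
  have hε1 : t - s*κ ≤ 1 := by linarith
  have hu0 : 0 ≤ α + 1 - s := by linarith
  have hkey' : 2*κ*t*α - (2*κ*t + t*(t-1))*γ ≤ 2*κ^2*(1-α) := by
    have e : 2*κ^2*(1-α) - (2*κ*t*α - (2*κ*t + t*(t-1))*γ)
        = 2*κ^2*((1-α) - (t/κ*α - (t/κ + t*(t-1)/(2*κ*κ))*γ)) := by
      field_simp
    nlinarith [mul_nonneg (by positivity : (0:ℝ) ≤ 2*κ^2) (sub_nonneg.mpr hkey)]
  have hB2 : 0 ≤ (1 - (t - s*κ))*(s*(α+1-s)) + (t - s*κ)*(s*(2-(α+1-s))-2) := by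
    have t2 : 0 ≤ s*(2-(α+1-s)) - 2 := by nlinarith
    have t1 : 0 ≤ (1 - (t-s*κ))*(s*(α+1-s)) :=
      mul_nonneg (by linarith) (mul_nonneg hs0 hu0)
    nlinarith [mul_nonneg hε0 t2]
  have hQ : (α+1-s)*(2*κ*t + t*(t-1)) ≤ 2*κ*t*α + 2*κ^2*α - 2*κ^2 := by
    have hQeq : 2*κ*t*α + 2*κ^2*α - 2*κ^2 - (α+1-s)*(2*κ*t + t*(t-1))
        = κ*((1 - (t - s*κ))*(s*(α+1-s)) + (t - s*κ)*(s*(2-(α+1-s))-2))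
          + (α+1-s)*(t-s*κ)*(1-(t-s*κ)) := by
      linear_combination (κ^2*(s+1-α)) * hs2
    have h1 : 0 ≤ κ*((1 - (t - s*κ))*(s*(α+1-s)) + (t - s*κ)*(s*(2-(α+1-s))-2)) :=
      mul_nonneg hκ0.le hB2
    have h2 : 0 ≤ (α+1-s)*(t-s*κ)*(1-(t-s*κ)) :=
      mul_nonneg (mul_nonneg hu0 hε0) (by linarith)
    linarith [hQeq, h1, h2]
  have ht14 : (1.414:ℝ) ≤ t := by nlinarith [mul_le_mul_of_nonneg_left hκ hs0]
  have hden : (0:ℝ) < 2*κ*t + t*(t-1) := by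
    nlinarith [mul_pos hκ0 (show (0:ℝ) < t by linarith),
      mul_nonneg (show (0:ℝ) ≤ t by linarith) (show (0:ℝ) ≤ t-1 by linarith)]
  have h1 : (α+1-s) * (2*κ*t + t*(t-1)) ≤ γ * (2*κ*t + t*(t-1)) := by nlinarith [hkey', hQ]
  exact (mul_le_mul_iff_of_pos_right hden).mp h1

set_option maxHeartbeats 2000000 in
/-- there is an absolute constant `c₀ > 0` such that for all `1 ≤ k₂ ≤ k`,
every feasible solution of `LP^{k,k₂}` has `β ≥ 2 − √2 − c₀/k`. -/
theorem stmt_13 :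
    ∃ c₀ : ℝ, 0 < c₀ ∧
      ∀ k k₂ : ℕ, 1 ≤ k₂ → k₂ ≤ k →
        ∀ (β α : ℝ) (a b c : ℕ → ℝ),
          LPFeasible k k₂ β α a b c →
          β ≥ 2 - Real.sqrt 2 - c₀ / (k : ℝ) := by
  refine ⟨1, one_pos, ?_⟩
  intro k K hK1 hKk β α a b c hfeas
  obtain ⟨h1, h2, h3, h4, h5, h6, h7⟩ := hfeas
  have hα0 := h4.1
  have hα1 := h4.2
  set s : ℝ := Real.sqrt 2 with hs
  have hs0 : 0 ≤ s := Real.sqrt_nonneg 2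
  have hs2 : s^2 = 2 := Real.sq_sqrt (by norm_num)
  have hslb : 1.414 ≤ s := by nlinarith
  have hsub : s ≤ 1.415 := by nlinarith
  have hk1 : 1 ≤ k := le_trans hK1 hKk
  have hKpos : (0:ℝ) < K := by exact_mod_cast hK1
  have hKge1 : (1:ℝ) ≤ K := by exact_mod_cast hK1
  have hkpos : (0:ℝ) < k := by exact_mod_cast hk1
  have hKk' : (K:ℝ) ≤ k := by exact_mod_cast hKk
  have hMge : (2*s + 1) * (k:ℝ) ≤ lpM k := Nat.le_ceil _
  set M := lpM k with hM
  suffices hmain : 2 - s ≤ β by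
    have hpos : (0:ℝ) < 1 / k := by positivity
    linarith
  set γ : ℝ := β - 1 + α with hγ
  have hwin : ∀ J ⊆ Icc 1 M, J.card = K → ∑ j ∈ J, (a j + c j) ≤ γ := by
    intro J hJ hcard
    have := h1 J hJ hcard
    simp only [hγ]
    linarith
  have hKM : K ≤ M := by
    have hr : (K:ℝ) ≤ (M:ℝ) := by nlinarith
    exact_mod_cast hr
  have hγ0 : 0 ≤ γ := by
    have hJ : Icc 1 K ⊆ Icc 1 M := Finset.Icc_subset_Icc_right hKM
    have hcard : (Icc 1 K).card = K := by rw [Nat.card_Icc]; omega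
    have hsum : 0 ≤ ∑ j ∈ Icc 1 K, (a j + c j) :=
      Finset.sum_nonneg (fun j hj =>
        add_nonneg (h5 j (hJ hj)).1 (h5 j (hJ hj)).2.2.2.2.1)
    have := hwin _ hJ hcard
    linarith
  have h5' : ∀ j ∈ Icc 1 M, 0 ≤ a j ∧ 0 ≤ b j ∧ 0 ≤ c j := fun j hj =>
    ⟨(h5 j hj).1, (h5 j hj).2.2.1, (h5 j hj).2.2.2.2.1⟩
  rcases le_or_gt α (3/5) with hαc | hαc
  · -- Branch 1 : window length N = 3K
    have h3KM : 3*K ≤ M := by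
      have hr : ((3*K:ℕ):ℝ) ≤ (M:ℝ) := by push_cast; nlinarith
      exact_mod_cast hr
    set C : ℝ := 15/2 - 3/(2*(K:ℝ)) with hC
    have hC1 : (((3*K:ℕ):ℝ) - 1)/(K:ℝ) + 1 ≤ C := by
      push_cast
      have e1 : (3*(K:ℝ) - 1)/(K:ℝ) + 1 = (8*(K:ℝ) - 2)/(2*(K:ℝ)) := by
        field_simp; ring
      have e2 : C = (15*(K:ℝ) - 3)/(2*(K:ℝ)) := by
        rw [hC]; field_simp
      rw [e1, e2]
      apply (div_le_div_iff_of_pos_right (by positivity)).mpr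
      linarith
    have hC2 : ((3*K:ℕ):ℝ) + ((3*K:ℕ):ℝ)*(((3*K:ℕ):ℝ)-1)/2/(K:ℝ) ≤ C*(K:ℝ) := by
      push_cast
      have e : (3*(K:ℝ)) + (3*(K:ℝ))*((3*(K:ℝ))-1)/2/(K:ℝ) = C*(K:ℝ) := by
        rw [hC]; field_simp; ring
      exact le_of_eq e
    have hK3 : K ≤ 3*K := by omega
    have hkey := lp_key M (3*K) K α γ C a b c hK1 hK3 h3KM h2 h3 h5' hwin hC1 hC2
    have hcast : ((3*K:ℕ):ℝ)/(K:ℝ) = 3 := by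
      push_cast
      field_simp
    rw [hcast] at hkey
    rcases le_or_gt α (s - 1) with hα2 | hα2
    · rw [hγ] at hγ0
      linarith
    · have hfin := final_branch1 s (K:ℝ) γ α hKge1 hαc hγ0 hslb (by rw [hC] at hkey; exact hkey)
      rw [hγ] at hfin
      linarith
  · -- Branch 2 : window length N = ⌊√2·K⌋ + 1
    set n := Nat.floor (s * (K:ℝ)) with hn
    have hn0 : (0:ℝ) ≤ s * K := by positivity
    have hnle : (n:ℝ) ≤ s*K := Nat.floor_le hn0
    have hnlt : s*(K:ℝ) < (n:ℝ)+1 := by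
      have := Nat.lt_floor_add_one (s*(K:ℝ))
      rw [← hn] at this
      linarith
    have hKn : K ≤ n := Nat.le_floor (by nlinarith : (K:ℝ) ≤ s*(K:ℝ))
    set N := n + 1 with hN
    have hKN : K ≤ N := le_trans hKn (Nat.le_succ n)
    have hNM : N ≤ M := by
      have hr : ((N:ℕ):ℝ) ≤ (M:ℝ) := by
        push_cast
        nlinarith [mul_le_mul_of_nonneg_left hKk' hs0, hnle, hMge, (by exact_mod_cast hk1 : (1:ℝ) ≤ k), (by simp [hN] : ((N:ℕ):ℝ) = (n:ℝ) + 1)]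
      exact_mod_cast hr
    set t : ℝ := (n:ℝ) + 1 with ht
    set C : ℝ := t/(K:ℝ) + t*(t-1)/(2*(K:ℝ)*(K:ℝ)) with hC
    have hcastN : ((N:ℕ):ℝ) = t := by rw [hN, ht]; push_cast; ring
    have ht1 : s*(K:ℝ) ≤ t := by rw [ht]; linarith
    have ht2 : t ≤ s*(K:ℝ) + 1 := by rw [ht]; linarith
    have hn2K : n + 1 ≤ 2*K := by
      have hr : (n:ℝ) < 2*K := lt_of_le_of_lt hnle (by nlinarith)
      have hr2 : n < 2*K := by exact_mod_cast hr
      omega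
    have ht2K : t ≤ 2*(K:ℝ) := by
      rw [ht]
      have : ((n+1:ℕ):ℝ) ≤ ((2*K:ℕ):ℝ) := by exact_mod_cast hn2K
      push_cast at this
      linarith
    have htsq : 2*(K:ℝ)^2 ≤ t^2 := by nlinarith [ht1, mul_nonneg hs0 hKpos.le]
    have hC1 : (((N:ℕ):ℝ) - 1)/(K:ℝ) + 1 ≤ C := by
      rw [hcastN]
      have e1 : (t - 1)/(K:ℝ) + 1 = (2*(K:ℝ)*(t-1) + 2*(K:ℝ)^2)/(2*(K:ℝ)^2) := by
        field_simp
      have e2 : C = (2*(K:ℝ)*t + t*(t-1))/(2*(K:ℝ)^2) := by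
        rw [hC]; field_simp
      rw [e1, e2]
      apply (div_le_div_iff_of_pos_right (by positivity)).mpr
      nlinarith [htsq, ht2K]
    have hC2 : ((N:ℕ):ℝ) + ((N:ℕ):ℝ)*(((N:ℕ):ℝ)-1)/2/(K:ℝ) ≤ C*(K:ℝ) := by
      rw [hcastN]
      have e : t + t*(t-1)/2/(K:ℝ) = C*(K:ℝ) := by
        rw [hC]; field_simp
      exact le_of_eq e
    have hkey := lp_key M N K α γ C a b c hK1 hKN hNM h2 h3 h5' hwin hC1 hC2
    rw [hcastN, hC] at hkey
    have hfin := final_branch2 s (K:ℝ) t γ α hs2 hs0 hKge1 ht1 ht2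
      (le_of_lt hαc) hα1 hslb hsub hkey
    rw [hγ] at hfin
    linarith
end

section
/- For all real numbers α, λ, r with 0 ≤ α ≤ 1, 0 < λ ≤ 1 and 0 ≤ r ≤ 1, if 1 − α ≥ (e^{−r}·α − λ)² / (2λ), then 1 − α + (1 − e^{−r})·α + (1 − r)·λ ≥ 2 − √2. -/
set_option maxHeartbeats 2000000 in
/-- for `0 ≤ α ≤ 1`, `0 < λ ≤ 1`, `0 ≤ r ≤ 1`, if
`1 − α ≥ (e^{−r}·α − λ)²/(2λ)` then `1 − α + (1 − e^{−r})·α + (1 − r)·λ ≥ 2 − √2`. -/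
theorem stmt_15 (α lam r : ℝ)
    (hα0 : 0 ≤ α) (hα1 : α ≤ 1)
    (hlam0 : 0 < lam) (hlam1 : lam ≤ 1)
    (hr0 : 0 ≤ r) (hr1 : r ≤ 1)
    (h : 1 - α ≥ (Real.exp (-r) * α - lam) ^ 2 / (2 * lam)) :
    1 - α + (1 - Real.exp (-r)) * α + (1 - r) * lam ≥ 2 - Real.sqrt 2 := by
  set s := Real.sqrt 2 with hs
  have hs2 : s ^ 2 = 2 := Real.sq_sqrt (by norm_num)
  have hs0 : 0 ≤ s := Real.sqrt_nonneg 2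
  have hs1 : 1.4 ≤ s := by nlinarith
  have hs1' : s ≤ 1.5 := by nlinarith
  set t := Real.exp (-r) with htdef
  have ht0 : 0 < t := Real.exp_pos _
  have ht1 : t ≤ 1 := Real.exp_le_one_iff.mpr (by linarith)
  have hexp : 1 + r + r ^ 2 / 2 ≤ Real.exp r := Real.quadratic_le_exp_of_nonneg hr0
  have htinv : t * (1 + r + r ^ 2 / 2) ≤ 1 := by
    have h1 : t * Real.exp r = 1 := by
      rw [htdef, ← Real.exp_add]; simp
    nlinarith [mul_le_mul_of_nonneg_left hexp ht0.le]
  clear_value s t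
  set x := t * α with hx
  have hx0 : 0 ≤ x := by positivity
  have hxα : x * (1 + r + r ^ 2 / 2) ≤ α := by
    have := mul_le_mul_of_nonneg_right htinv hα0
    nlinarith
  have hcon : (x - lam) ^ 2 ≤ 2 * lam * (1 - α) := by
    have := (div_le_iff₀ (by positivity : (0:ℝ) < 2 * lam)).mp h
    nlinarith
  clear_value x
  have key : x ≤ s - 1 + (1 - r) * lam := by
    set B := s - 1 + (1 - r) * lam with hBdef
    clear_value B
    rcases le_or_gt (r * lam) (s - 1) with hA | hB
    · -- Case A
      have h1 : (x - lam) ^ 2 + 2 * lam * x * (1 + r + r ^ 2 / 2) ≤ 2 * lam := by nlinarith [mul_le_mul_of_nonneg_left hxα (by positivity : (0:ℝ) ≤ 2 * lam)]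
      have hfB : 0 ≤ (B - lam) ^ 2 + 2 * lam * B * (1 + r + r ^ 2 / 2) - 2 * lam := by
        have e1 : (B - lam) ^ 2 + 2 * lam * B * (1 + r + r ^ 2 / 2) - 2 * lam =
            (1/2) * (2 * lam - (2 - s)) ^ 2 + lam * r ^ 2 * ((s - 1) - lam * r)
              + (s ^ 2 - 2) / 2 := by rw [hBdef]; ring
        rw [e1, hs2]
        have h2 : 0 ≤ lam * r ^ 2 * ((s - 1) - lam * r) := by
          apply mul_nonneg (by positivity)
          nlinarith
        nlinarith [sq_nonneg (2 * lam - (2 - s))]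
      by_contra hc
      push_neg at hc
      have hB0 : 0 < B := by rw [hBdef]; nlinarith
      have hmono : ((x - lam) ^ 2 + 2 * lam * x * (1 + r + r ^ 2 / 2))
          - ((B - lam) ^ 2 + 2 * lam * B * (1 + r + r ^ 2 / 2))
          = (x - B) * (x + B + 2 * lam * (r + r ^ 2 / 2)) := by ring
      have hprod : 0 < (x - B) * (x + B + 2 * lam * (r + r ^ 2 / 2)) := by
        apply mul_pos (by linarith)
        have : 0 ≤ 2 * lam * (r + r ^ 2 / 2) := by positivity
        linarith
      linarith [hmono, h1, hfB]
    · -- Case B : s - 1 < r * lam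
      have hr0' : 0 < r := by nlinarith
      have hx1 : x * (1 + r + r ^ 2 / 2) ≤ 1 := le_trans hxα hα1
      have hkey : r ≤ (s - 1) * (1 + r + r ^ 2 / 2) := by nlinarith
      have hxr : x * r ≤ s - 1 := by
        have hpos : (0:ℝ) < 1 + r + r ^ 2 / 2 := by positivity
        nlinarith [mul_le_mul_of_nonneg_right hx1 hr0]
      rw [hBdef]
      nlinarith [mul_le_mul_of_nonneg_left hB.le (sub_nonneg.mpr hr1)]
  nlinarith
end

section
/- For all real numbers α, λ, r with 0 ≤ α ≤ 1, 0 ≤ λ ≤ 1 and 0 ≤ r ≤ 1, if 1 − α ≥ √2·(e^{−r}·α − λ), then 1 − α + (1 − e^{−r})·α + (1 − r)·λ ≥ 2 − √2. -/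
private lemma q2_aux (r s : ℝ) (hr0 : 0 ≤ r) (hr1 : r ≤ 1)
    (hslo : 1.414 ≤ s) (hshi : s ≤ 1.4143) :
    0 ≤ (s - 1) * (1 + r + r ^ 2 / 2) ^ 2 + ((2 - s - r) * (1 + r + r ^ 2 / 2) - s * r) := by
  nlinarith [sq_nonneg (r - 1), sq_nonneg r, mul_nonneg hr0 hr0,
    mul_nonneg (mul_nonneg hr0 hr0) hr0,
    mul_nonneg (mul_nonneg (mul_nonneg hr0 hr0) hr0) hr0,
    mul_nonneg (mul_nonneg hr0 hr0) (sq_nonneg (r - 1)),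
    mul_nonneg hr0 (sq_nonneg (r - 1))]

private lemma K_aux (r E s m x : ℝ) (hr0 : 0 ≤ r) (hr1 : r ≤ 1) (hE0 : 0 < E)
    (hE1 : 1 - r ≤ E) (hm : m = 1 + r + r ^ 2 / 2) (hE2 : E * m ≤ 1)
    (hx : x = (2 - s - r) * m - s * r)
    (hslo : 1.414 ≤ s) (hshi : s ≤ 1.4143) :
    0 ≤ (s - 1) * (1 - E) + E * ((1 - r) - s * r * E) := by
  have hs0 : (0:ℝ) ≤ s := by linarith
  have hm0 : (0:ℝ) < m := by nlinarith [sq_nonneg r]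
  have hEm0 : 0 ≤ E * m := by positivity
  have q2 : 0 ≤ (s - 1) * m ^ 2 + x := by
    have := q2_aux r s hr0 hr1 hslo hshi
    rw [hx, hm]; linarith
  have hQm : 0 ≤ ((s - 1) * m + E * x) * m := by
    have hid : ((s - 1) * m + E * x) * m = (s - 1) * m ^ 2 + (E * m) * x := by ring
    rcases le_or_gt 0 x with hx0 | hx0
    · rw [hid]; nlinarith [mul_nonneg hEm0 hx0, sq_nonneg m]
    · have h1 : (E * m) * x ≥ 1 * x := mul_le_mul_of_nonpos_right hE2 hx0.le
      rw [hid]; linarith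
  have hQ : 0 ≤ (s - 1) * m + E * x := by
    have h0 : 0 * m ≤ ((s - 1) * m + E * x) * m := by linarith
    exact le_of_mul_le_mul_right (by linarith) hm0
  have hKm : ((s - 1) * (1 - E) + E * ((1 - r) - s * r * E)) * m
      = ((s - 1) * m + E * x) + s * r * E * (1 - E * m) := by rw [hx]; ring
  have hpos : 0 ≤ s * r * E * (1 - E * m) := by
    have : 0 ≤ s * r * E := by positivity
    nlinarith
  have hfin : 0 * m ≤ ((s - 1) * (1 - E) + E * ((1 - r) - s * r * E)) * m := by
    rw [hKm]; linarith
  exact le_of_mul_le_mul_right (by linarith [hfin]) hm0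

/-- for `0 ≤ α ≤ 1`, `0 ≤ λ ≤ 1`, `0 ≤ r ≤ 1`, if
`1 − α ≥ √2·(e^{−r}·α − λ)` then `1 − α + (1 − e^{−r})·α + (1 − r)·λ ≥ 2 − √2`. -/
theorem stmt_16 (α lam r : ℝ)
    (hα0 : 0 ≤ α) (hα1 : α ≤ 1)
    (hlam0 : 0 ≤ lam) (hlam1 : lam ≤ 1)
    (hr0 : 0 ≤ r) (hr1 : r ≤ 1)
    (h : 1 - α ≥ Real.sqrt 2 * (Real.exp (-r) * α - lam)) :
    1 - α + (1 - Real.exp (-r)) * α + (1 - r) * lam ≥ 2 - Real.sqrt 2 := by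
  set s := Real.sqrt 2 with hsdef
  set E := Real.exp (-r) with hEdef
  have hs2 : s ^ 2 = 2 := Real.sq_sqrt (by norm_num)
  have hs0 : 0 ≤ s := Real.sqrt_nonneg 2
  have hslo : 1.414 ≤ s := by nlinarith
  have hshi : s ≤ 1.4143 := by nlinarith
  have hE0 : 0 < E := Real.exp_pos _
  have hE1 : 1 - r ≤ E := by
    have := Real.add_one_le_exp (-r); linarith
  have hEle1 : E ≤ 1 := by
    rw [hEdef, ← Real.exp_zero]
    exact Real.exp_le_exp.mpr (by linarith)
  have hm0 : (0:ℝ) < 1 + r + r ^ 2 / 2 := by positivity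
  have hE2 : E * (1 + r + r ^ 2 / 2) ≤ 1 := by
    have hq : 1 + r + r ^ 2 / 2 ≤ Real.exp r := Real.quadratic_le_exp_of_nonneg hr0
    have hprod : E * Real.exp r = 1 := by rw [hEdef, ← Real.exp_add]; simp
    have := mul_le_mul_of_nonneg_left hq hE0.le
    linarith
  have hrE : r * E ≤ s - 1 := by
    have h1 : r * (E * (1 + r + r ^ 2 / 2)) ≤ r * 1 :=
      mul_le_mul_of_nonneg_left hE2 hr0
    have h2 : r ≤ (s - 1) * (1 + r + r ^ 2 / 2) := by
      nlinarith [mul_nonneg (by linarith : (0:ℝ) ≤ s - 1) (sq_nonneg (r - s))]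
    have e1 : r * E * (1 + r + r ^ 2 / 2) = r * (E * (1 + r + r ^ 2 / 2)) := by ring
    have h3 : r * E * (1 + r + r ^ 2 / 2) ≤ (s - 1) * (1 + r + r ^ 2 / 2) := by
      rw [e1]; linarith
    exact le_of_mul_le_mul_right h3 hm0
  rcases le_or_gt lam E with hle | hlt
  · have key : 0 ≤ (s - 1) * (1 - E) + lam * ((1 - r) - s * r * E) := by
      rcases le_or_gt 0 ((1 - r) - s * r * E) with hpos | hneg
      · have t1 := mul_nonneg hlam0 hpos
        have t2 : 0 ≤ (s - 1) * (1 - E) := mul_nonneg (by linarith) (by linarith)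
        linarith
      · have h1 : E * ((1 - r) - s * r * E) ≤ lam * ((1 - r) - s * r * E) :=
          mul_le_mul_of_nonpos_right hle hneg.le
        have hK := K_aux r E s (1 + r + r ^ 2 / 2) ((2 - s - r) * (1 + r + r ^ 2 / 2) - s * r)
          hr0 hr1 hE0 hE1 rfl hE2 rfl hslo hshi
        linarith
    have h1 : α * (1 + s * E) ≤ 1 + s * lam := by
      have e1 : α * (1 + s * E) - (1 + s * lam) = -(1 - α) + s * (E * α - lam) := by ring
      have h2 : s * (E * α - lam) ≤ 1 - α := h
      linarith [e1.ge, e1.le]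
    have h5 : E * α ≤ (s - 1) + (1 - r) * lam := by
      have h2 : E * (α * (1 + s * E)) ≤ E * (1 + s * lam) :=
        mul_le_mul_of_nonneg_left h1 hE0.le
      have h3 : ((s - 1) + (1 - r) * lam) * (1 + s * E) - E * (1 + s * lam)
          = (s - 1) * (1 - E) + lam * ((1 - r) - s * r * E) + (s ^ 2 - 2) * E := by ring
      have e2 : E * α * (1 + s * E) = E * (α * (1 + s * E)) := by ring
      have h4 : E * α * (1 + s * E) ≤ ((s - 1) + (1 - r) * lam) * (1 + s * E) := by
        rw [e2]
        have : (s ^ 2 - 2) * E = 0 := by rw [hs2]; ring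
        linarith [h3.ge, h3.le]
      have hpos : 0 < 1 + s * E := by positivity
      exact le_of_mul_le_mul_right h4 hpos
    have e3 : 1 - α + (1 - E) * α + (1 - r) * lam = 1 - E * α + (1 - r) * lam := by ring
    linarith [e3.ge, e3.le]
  · have h1 : E * α ≤ E := by
      have := mul_le_mul_of_nonneg_left hα1 hE0.le
      linarith [this]
    have h2 : (1 - r) * E ≤ (1 - r) * lam :=
      mul_le_mul_of_nonneg_left hlt.le (by linarith)
    have e3 : 1 - α + (1 - E) * α + (1 - r) * lam = 1 - E * α + (1 - r) * lam := by ring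
    have e4 : (1 - r) * E = E - r * E := by ring
    linarith [e3.ge, e3.le, e4.ge, e4.le]
end

section
/- Let f be a submodular set function on a finite ground set with f(∅) = 0, let V be a finite set, and let 0 ≤ k ≤ |V|. If S is a uniformly random subset of V of size k, then 𝔼[f(S)] ≥ (k/|V|)·f(V). -/
open Finset

lemma stmt18_marg_aux {α : Type*} [DecidableEq α] (f : Finset α → ℝ)
    (hsub : ∀ X Y : Finset α, X ⊆ Y → ∀ x, x ∉ Y →
      f (insert x Y) - f Y ≤ f (insert x X) - f X)
    (V : Finset α) :
    ∀ n (T : Finset α), T ⊆ V → (V \ T).card = n →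
      f V - f T ≤ ∑ x ∈ V \ T, (f (insert x T) - f T) := by
  intro n
  induction n with
  | zero =>
    intro T hT hc
    have h0 : V \ T = ∅ := Finset.card_eq_zero.mp hc
    have : V = T := Finset.Subset.antisymm (Finset.sdiff_eq_empty_iff_subset.mp h0) hT
    rw [h0, this]
    simp
  | succ n ih =>
    intro T hT hc
    have hne : (V \ T).Nonempty := Finset.card_pos.mp (by omega)
    obtain ⟨x, hx⟩ := hne
    have hxV : x ∈ V := (Finset.mem_sdiff.mp hx).1
    have hxT : x ∉ T := (Finset.mem_sdiff.mp hx).2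
    have hT' : insert x T ⊆ V := Finset.insert_subset hxV hT
    have hsd : V \ insert x T = (V \ T).erase x := by
      ext y; simp [Finset.mem_sdiff, Finset.mem_erase, Finset.mem_insert]; tauto
    have hc' : (V \ insert x T).card = n := by
      rw [hsd, Finset.card_erase_of_mem hx, hc]; omega
    have key := ih (insert x T) hT' hc'
    have step : ∀ y ∈ V \ insert x T,
        f (insert y (insert x T)) - f (insert x T) ≤ f (insert y T) - f T := by
      intro y hy
      exact hsub T (insert x T) (Finset.subset_insert x T) y (Finset.mem_sdiff.mp hy).2
    have hsum : ∑ y ∈ V \ insert x T, (f (insert y (insert x T)) - f (insert x T))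
        ≤ ∑ y ∈ V \ insert x T, (f (insert y T) - f T) :=
      Finset.sum_le_sum step
    have hsplit : ∑ y ∈ (V \ T).erase x, (f (insert y T) - f T) + (f (insert x T) - f T)
        = ∑ y ∈ V \ T, (f (insert y T) - f T) :=
      Finset.sum_erase_add _ _ hx
    rw [hsd] at key hsum
    linarith

lemma stmt18_dsum {α : Type*} [DecidableEq α] (f : Finset α → ℝ) (V : Finset α) (j : ℕ) :
    ∑ T ∈ powersetCard j V, ∑ x ∈ V \ T, f (insert x T)
      = ((j + 1 : ℕ) : ℝ) * ∑ S ∈ powersetCard (j+1) V, f S := by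
  rw [Finset.mul_sum]
  have h2 : ∀ S ∈ powersetCard (j+1) V, ((j+1:ℕ):ℝ) * f S = ∑ _x ∈ S, f S := by
    intro S hS
    rw [Finset.sum_const, (Finset.mem_powersetCard.mp hS).2, nsmul_eq_mul]
  rw [Finset.sum_congr rfl h2, Finset.sum_sigma' (powersetCard j V) (fun T => V \ T)
      (fun T x => f (insert x T)),
    Finset.sum_sigma' (powersetCard (j+1) V) (fun S => S) (fun S _ => f S)]
  apply Finset.sum_nbij' (fun p => (⟨insert p.2 p.1, p.2⟩ : Σ _ : Finset α, α))
    (fun q => (⟨q.1.erase q.2, q.2⟩ : Σ _ : Finset α, α))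
  · rintro ⟨T, x⟩ hp
    rw [Finset.mem_sigma] at hp ⊢
    obtain ⟨hT, hx⟩ := hp
    obtain ⟨hTV, hTc⟩ := Finset.mem_powersetCard.mp hT
    rw [Finset.mem_sdiff] at hx
    refine ⟨Finset.mem_powersetCard.mpr ⟨Finset.insert_subset hx.1 hTV, ?_⟩,
      Finset.mem_insert_self _ _⟩
    rw [Finset.card_insert_of_notMem hx.2, hTc]
  · rintro ⟨S, x⟩ hq
    rw [Finset.mem_sigma] at hq ⊢
    obtain ⟨hS, hx⟩ := hq
    obtain ⟨hSV, hSc⟩ := Finset.mem_powersetCard.mp hS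
    refine ⟨Finset.mem_powersetCard.mpr ⟨(Finset.erase_subset x S).trans hSV, ?_⟩, ?_⟩
    · rw [Finset.card_erase_of_mem hx, hSc]; omega
    · exact Finset.mem_sdiff.mpr ⟨hSV hx, Finset.notMem_erase x S⟩
  · rintro ⟨T, x⟩ hp
    rw [Finset.mem_sigma] at hp
    have hx := Finset.mem_sdiff.mp hp.2
    simp [Finset.erase_insert hx.2]
  · rintro ⟨S, x⟩ hq
    rw [Finset.mem_sigma] at hq
    simp [Finset.insert_erase hq.2]
  · rintro ⟨T, x⟩ hp
    rfl

lemma stmt18_main_ind {α : Type*} [DecidableEq α] (f : Finset α → ℝ)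
    (hempty : f ∅ = 0) (V : Finset α)
    (marg : ∀ T : Finset α, T ⊆ V →
      f V - f T ≤ ∑ x ∈ V \ T, (f (insert x T) - f T))
    (dsum : ∀ j : ℕ, ∑ T ∈ powersetCard j V, ∑ x ∈ V \ T, f (insert x T)
      = ((j + 1 : ℕ) : ℝ) * ∑ S ∈ powersetCard (j+1) V, f S) :
    ∀ j ≤ V.card,
      ((j : ℝ) * (V.card.choose j : ℝ)) * f V ≤ (V.card : ℝ) * ∑ S ∈ powersetCard j V, f S := by
  intro j
  induction j with
  | zero =>
    intro _
    simp [Finset.powersetCard_zero, hempty]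
  | succ j ih =>
    intro hj
    have hjn : j ≤ V.card := by omega
    have ihj := ih hjn
    set n := V.card with hn
    set A := ∑ S ∈ powersetCard j V, f S with hA
    set B := ∑ S ∈ powersetCard (j+1) V, f S with hB
    set ch : ℝ := (n.choose j : ℝ) with hch
    set ch' : ℝ := (n.choose (j+1) : ℝ) with hch'
    have hlow : ∀ T ∈ powersetCard j V,
        f V + ((n:ℝ) - (j:ℝ) - 1) * f T ≤ ∑ x ∈ V \ T, f (insert x T) := by
      intro T hT
      obtain ⟨hTV, hTc⟩ := Finset.mem_powersetCard.mp hT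
      have hm := marg T hTV
      have hcard : (V \ T).card = n - j := by rw [Finset.card_sdiff_of_subset hTV, hTc]
      have hexp : ∑ x ∈ V \ T, (f (insert x T) - f T)
          = (∑ x ∈ V \ T, f (insert x T)) - ((n:ℝ) - (j:ℝ)) * f T := by
        rw [Finset.sum_sub_distrib, Finset.sum_const, hcard, nsmul_eq_mul,
          Nat.cast_sub hjn]
      rw [hexp] at hm
      linarith
    have hsum1 : ch * f V + ((n:ℝ) - (j:ℝ) - 1) * A ≤ ((j:ℝ) + 1) * B := by
      have hd := dsum j
      push_cast at hd
      rw [← hd]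
      calc ch * f V + ((n:ℝ) - (j:ℝ) - 1) * A
          = ∑ T ∈ powersetCard j V, (f V + ((n:ℝ) - (j:ℝ) - 1) * f T) := by
            rw [Finset.sum_add_distrib, Finset.sum_const, ← Finset.mul_sum,
              Finset.card_powersetCard, nsmul_eq_mul, hch]
        _ ≤ ∑ T ∈ powersetCard j V, ∑ x ∈ V \ T, f (insert x T) :=
            Finset.sum_le_sum hlow
    have hchoose : ch' * ((j:ℝ) + 1) = ch * ((n:ℝ) - (j:ℝ)) := by
      rw [hch, hch']
      have := Nat.choose_succ_right_eq n j
      have h1 : ((n.choose (j+1) * (j+1) : ℕ) : ℝ) = ((n.choose j * (n - j) : ℕ) : ℝ) := by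
        exact_mod_cast congrArg (Nat.cast : ℕ → ℝ) this
      push_cast [Nat.cast_sub hjn] at h1
      linarith
    have hnn : ((n:ℝ) - (j:ℝ) - 1) ≥ 0 := by
      have : ((j:ℝ) + 1) ≤ (n:ℝ) := by exact_mod_cast hj
      linarith
    have hnpos : (0:ℝ) ≤ (n:ℝ) := Nat.cast_nonneg n
    have e1 : (n:ℝ) * (ch * f V + ((n:ℝ) - (j:ℝ) - 1) * A) ≤ (n:ℝ) * (((j:ℝ) + 1) * B) :=
      mul_le_mul_of_nonneg_left hsum1 hnpos
    have e2 : ((n:ℝ) - (j:ℝ) - 1) * ((j:ℝ) * ch * f V) ≤ ((n:ℝ) - (j:ℝ) - 1) * ((n:ℝ) * A) :=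
      mul_le_mul_of_nonneg_left ihj hnn
    have I : ((j:ℝ)+1) * (((j:ℝ)+1) * ch' * f V)
        = (n:ℝ) * (ch * f V) + ((n:ℝ) - (j:ℝ) - 1) * ((j:ℝ) * ch * f V) := by
      linear_combination ((j:ℝ)+1) * f V * hchoose
    have hG : ((j:ℝ)+1) * (((j:ℝ)+1) * ch' * f V) ≤ ((j:ℝ)+1) * ((n:ℝ) * B) := by
      nlinarith [e1, e2, I]
    have hj1 : (0:ℝ) < (j:ℝ) + 1 := by positivity
    have := le_of_mul_le_mul_left hG hj1
    push_cast
    linarith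

/-- for submodular `f` with `f(∅) = 0`, a finite set `V`, and `0 ≤ k ≤ |V|`,
a uniformly random `k`-element subset `S` of `V` satisfies `𝔼[f(S)] ≥ (k/|V|)·f(V)`. -/
theorem stmt_18 {α : Type*} [DecidableEq α] [Fintype α]
    (f : Finset α → ℝ)
    (hsub : ∀ X Y : Finset α, X ⊆ Y → ∀ x, x ∉ Y →
      f (insert x Y) - f Y ≤ f (insert x X) - f X)
    (hempty : f ∅ = 0)
    (V : Finset α) (k : ℕ) (hk : k ≤ V.card) :
    (∑ S ∈ Finset.powersetCard k V, f S) / ((Finset.powersetCard k V).card : ℝ)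
      ≥ ((k : ℝ) / (V.card : ℝ)) * f V := by
  have marg : ∀ T : Finset α, T ⊆ V →
      f V - f T ≤ ∑ x ∈ V \ T, (f (insert x T) - f T) := fun T hT =>
    stmt18_marg_aux f hsub V (V \ T).card T hT rfl
  have key := stmt18_main_ind f hempty V marg (stmt18_dsum f V) k hk
  rcases Nat.eq_zero_or_pos V.card with h0 | hpos
  · have hk0 : k = 0 := by omega
    subst hk0
    simp [Finset.powersetCard_zero, hempty]
  · have hnpos : (0:ℝ) < (V.card : ℝ) := by exact_mod_cast hpos
    have hchpos : (0:ℝ) < ((Finset.powersetCard k V).card : ℝ) := by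
      rw [Finset.card_powersetCard]
      exact_mod_cast Nat.choose_pos hk
    rw [ge_iff_le, le_div_iff₀ hchpos, div_mul_eq_mul_div, div_mul_eq_mul_div,
      div_le_iff₀ hnpos]
    rw [Finset.card_powersetCard] at *
    nlinarith [key]
end

section
/- Let f be a submodular set function on a finite ground set with f(∅) = 0, let 0 ≤ ε < 1 and k' ≥ 1, let T be a finite set, and let y_1, …, y_{k'} ∈ T be distinct elements with S^j := {y_1, …, y_j} (S^0 = ∅) such that for every 1 ≤ j ≤ k' and every x ∈ T \ S^{j−1}, Δ(y_j, S^{j−1}) ≥ (1 − ε)·Δ(x, S^{j−1}) (i.e., each selected element has marginal value at least a (1−ε) fraction of the maximum marginal value, as in the almost linear-time algorithm of Badanidiyuru and Vondrák). Then for every x ∈ T \ S^{k'}, Δ(x, S^{k'}) ≤ (1/(1−ε))·f(S^{k'})/k'; in particular such an algorithm satisfies the second property of a 1/(1−ε)-nice algorithm. -/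
open Finset

/-- for submodular `f` with `f(∅) = 0`, `0 ≤ ε < 1`, `k' ≥ 1`, distinct
elements `y_1,…,y_{k'} ∈ T` with prefixes `S^j = {y_1,…,y_j}` such that each selected element
has marginal value at least a `(1−ε)` fraction of the maximum marginal value over `T`
(the almost linear-time algorithm of Badanidiyuru–Vondrák), every `x ∈ T \ S^{k'}` satisfies
`Δ(x, S^{k'}) ≤ (1/(1−ε))·f(S^{k'})/k'` — the second property of a `1/(1−ε)`-nice algorithm. -/
theorem stmt_19 {α : Type*} [DecidableEq α] [Fintype α]
    (f : Finset α → ℝ)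
    (hsub : ∀ X Y : Finset α, X ⊆ Y → ∀ x, x ∉ Y →
      f (insert x Y) - f Y ≤ f (insert x X) - f X)
    (hempty : f ∅ = 0)
    (ε : ℝ) (hε0 : 0 ≤ ε) (hε1 : ε < 1)
    (k' : ℕ) (hk' : 1 ≤ k')
    (T : Finset α) (y : Fin k' → α) (hyT : ∀ j, y j ∈ T)
    (hy : Function.Injective y)
    (hgreedy : ∀ j : Fin k',
      ∀ x ∈ T \ (Finset.univ.filter fun i : Fin k' => i < j).image y,
        (1 - ε) * (f (insert x ((Finset.univ.filter fun i : Fin k' => i < j).image y)) -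
            f ((Finset.univ.filter fun i : Fin k' => i < j).image y))
          ≤ f (insert (y j) ((Finset.univ.filter fun i : Fin k' => i < j).image y)) -
            f ((Finset.univ.filter fun i : Fin k' => i < j).image y)) :
    ∀ x ∈ T \ Finset.univ.image y,
      f (insert x (Finset.univ.image y)) - f (Finset.univ.image y)
        ≤ (1 / (1 - ε)) * f (Finset.univ.image y) / (k' : ℝ) := by
  intro x hx
  rw [mem_sdiff] at hx
  obtain ⟨hxT, hxS⟩ := hx
  set S := Finset.univ.image y with hS
  set Δ := f (insert x S) - f S with hΔ
  set P : ℕ → Finset α := fun n => (Finset.univ.filter fun i : Fin k' => (i : ℕ) < n).image y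
    with hP
  have hPsub : ∀ n, P n ⊆ S := by
    intro n
    rw [hS]
    exact image_subset_image (filter_subset _ _)
  have hP0 : P 0 = ∅ := by simp [hP]
  have hPk : P k' = S := by
    have huniv : (Finset.univ.filter fun i : Fin k' => (i : ℕ) < k') = Finset.univ := by
      ext i; simp [i.isLt]
    simp only [hP]
    rw [huniv, hS]
  have hstep : ∀ j : Fin k', P (j + 1) = insert (y j) (P j) := by
    intro j
    ext a
    simp only [hP, mem_image, mem_filter, mem_univ, true_and, mem_insert]
    constructor
    · rintro ⟨i, hi, rfl⟩
      rcases Nat.lt_succ_iff_lt_or_eq.mp hi with h | h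
      · exact Or.inr ⟨i, h, rfl⟩
      · left; exact congrArg y (Fin.ext h)
    · rintro (rfl | ⟨i, hi, rfl⟩)
      · exact ⟨j, Nat.lt_succ_self _, rfl⟩
      · exact ⟨i, Nat.lt_succ_of_lt hi, rfl⟩
  have hmain : ∀ n ≤ k', (n : ℝ) * ((1 - ε) * Δ) ≤ f (P n) := by
    intro n hn
    induction n with
    | zero => simp [hP0, hempty]
    | succ m ih =>
      have hm : m ≤ k' := Nat.le_of_succ_le hn
      have hmlt : m < k' := Nat.lt_of_succ_le hn
      set j : Fin k' := ⟨m, hmlt⟩ with hj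
      have hPj : (Finset.univ.filter fun i : Fin k' => i < j).image y = P m := by
        simp only [hP]
        have : (Finset.univ.filter fun i : Fin k' => i < j) =
            (Finset.univ.filter fun i : Fin k' => (i : ℕ) < m) := by
          ext i; simp [Fin.lt_def, hj]
        rw [this]
      have hxP : x ∉ P m := fun h => hxS (hPsub m h)
      have hg := hgreedy j x (by rw [mem_sdiff, hPj]; exact ⟨hxT, hxP⟩)
      rw [hPj] at hg
      have hsub' : Δ ≤ f (insert x (P m)) - f (P m) := hsub _ _ (hPsub m) x hxS
      have h2 : (1 - ε) * Δ ≤ f (P (m + 1)) - f (P m) := by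
        have h3 : P (m + 1) = insert (y j) (P m) := hstep j
        rw [h3]
        calc (1 - ε) * Δ ≤ (1 - ε) * (f (insert x (P m)) - f (P m)) :=
              mul_le_mul_of_nonneg_left hsub' (by linarith)
          _ ≤ _ := hg
      push_cast
      linarith [ih hm]
  have hfinal := hmain k' le_rfl
  rw [hPk] at hfinal
  have h1ε : (0:ℝ) < 1 - ε := by linarith
  have hk0 : (0:ℝ) < (k' : ℝ) := by exact_mod_cast hk'
  have key : Δ * ((1 - ε) * (k' : ℝ)) ≤ f S := by
    calc Δ * ((1 - ε) * (k' : ℝ)) = (k' : ℝ) * ((1 - ε) * Δ) := by ring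
      _ ≤ f S := hfinal
  have heq : (1 / (1 - ε)) * f S / (k' : ℝ) = f S / ((1 - ε) * (k' : ℝ)) := by
    rw [one_div, inv_mul_eq_div, div_div]
  rw [heq, le_div_iff₀ (by positivity)]
  exact key
end
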